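/- arXiv:1912.05775 — 6 statements merged into one kernel-verified Lean document; each statement's English description precedes it below -/
import Mathlib

section
/- Let T be a tree that has at least one end-palm, and let P_1, P_2, …, P_b be the end-palms of T (b ≥ 1). Then χ_L(T) ≤ 2 − 2b + Σ_{i=1}^{b} χ_L(P_i). -/
open SimpleGraph

/-- Distance from a vertex to a set of vertices, `d(u,S) = min {d(u,v) : v ∈ S}`. -/
noncomputable def distToSet {V : Type*} (G : SimpleGraph V) (u : V) (S : Set V) : ℕ :=
  sInf (G.dist u '' S)

/-- `c` is a locating coloring of `G` with `k` colors: a proper coloring such that any two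
distinct vertices are resolved by some color class. -/
def IsLocatingColoring {V : Type*} (G : SimpleGraph V) {k : ℕ} (c : V → Fin k) : Prop :=
  (∀ u v : V, G.Adj u v → c u ≠ c v) ∧
  ∀ u v : V, u ≠ v →
    ∃ i : Fin k, distToSet G u (c ⁻¹' {i}) ≠ distToSet G v (c ⁻¹' {i})

/-- The locating chromatic number `χ_L(G)`: the least `k` admitting a locating `k`-coloring. -/
noncomputable def locatingChromaticNumber {V : Type*} (G : SimpleGraph V) : ℕ :=
  sInf {k : ℕ | ∃ c : V → Fin k, IsLocatingColoring G c}

/-- A walk `p` from `u` to `v` is an *end-path* if it is a path joining a leaf `u` to its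
nearest branch `v`: `u` has degree 1, `v` has degree at least 3, and every internal
vertex of the path has degree 2. -/
def IsEndPath {V : Type*} [Fintype V] (T : SimpleGraph V) [DecidableRel T.Adj]
    {u v : V} (p : T.Walk u v) : Prop :=
  p.IsPath ∧ T.degree u = 1 ∧ 3 ≤ T.degree v ∧
    ∀ w ∈ p.support, w ≠ u → w ≠ v → T.degree w = 2

/-- A vertex is an *end-branch* if it is a branch at which at least two end-paths end. -/
def IsEndBranch {V : Type*} [Fintype V] (T : SimpleGraph V) [DecidableRel T.Adj]
    (v : V) : Prop :=
  ∃ (u₁ u₂ : V) (p₁ : T.Walk u₁ v) (p₂ : T.Walk u₂ v),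
    u₁ ≠ u₂ ∧ IsEndPath T p₁ ∧ IsEndPath T p₂

/-- The *end-palm* of an end-branch `v`: the vertex `v` together with all vertices of
the end-paths ending at `v`. -/
def endPalm {V : Type*} [Fintype V] (T : SimpleGraph V) [DecidableRel T.Adj]
    (v : V) : Set V :=
  {v} ∪ {w | ∃ (u : V) (p : T.Walk u v), IsEndPath T p ∧ w ∈ p.support}

namespace LocAux

open SimpleGraph Walk Set

/-! ### Generic `distToSet` lemmas -/

section DistToSet

variable {V : Type*} {G : SimpleGraph V} {u v z : V} {S A B : Set V}

lemma distToSet_le (hz : z ∈ S) : distToSet G u S ≤ G.dist u z :=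
  Nat.sInf_le ⟨z, hz, rfl⟩

lemma distToSet_eq_zero_of_mem (h : u ∈ S) : distToSet G u S = 0 := by
  have := distToSet_le (G := G) (u := u) h
  simp only [SimpleGraph.dist_self] at this
  omega

lemma exists_eq_distToSet (hS : S.Nonempty) : ∃ z ∈ S, G.dist u z = distToSet G u S := by
  have := Nat.sInf_mem (hS.image (G.dist u))
  obtain ⟨z, hz, hz'⟩ := this
  exact ⟨z, hz, hz'⟩

lemma le_distToSet {n : ℕ} (hS : S.Nonempty) (h : ∀ z ∈ S, n ≤ G.dist u z) :
    n ≤ distToSet G u S := by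
  apply le_csInf (hS.image _)
  rintro b ⟨z, hz, rfl⟩
  exact h z hz

lemma distToSet_union_left (hA : A.Nonempty)
    (hB : ∀ z ∈ B, distToSet G u A ≤ G.dist u z) :
    distToSet G u (A ∪ B) = distToSet G u A := by
  apply le_antisymm
  · obtain ⟨z, hz, hz'⟩ := exists_eq_distToSet (G := G) (u := u) hA
    rw [← hz']
    exact distToSet_le (Set.mem_union_left _ hz)
  · apply le_distToSet (hA.mono Set.subset_union_left)
    rintro z (hz | hz)
    · exact distToSet_le hz
    · exact hB z hz

lemma distToSet_offset (hS : S.Nonempty) (k : ℕ)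
    (h : ∀ z ∈ S, G.dist u z = k + G.dist v z) :
    distToSet G u S = k + distToSet G v S := by
  apply le_antisymm
  · obtain ⟨z, hz, hz'⟩ := exists_eq_distToSet (G := G) (u := v) hS
    calc distToSet G u S ≤ G.dist u z := distToSet_le hz
    _ = k + G.dist v z := h z hz
    _ = k + distToSet G v S := by rw [hz']
  · apply le_distToSet hS
    intro z hz
    rw [h z hz]
    exact Nat.add_le_add_left (distToSet_le hz) k

end DistToSet

/-! ### Tree and walk basics -/

section Tree

variable {V : Type*} {T : SimpleGraph V} (hT : T.IsTree)

include hT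

lemma path_unique {u v : V} {p q : T.Walk u v} (hp : p.IsPath) (hq : q.IsPath) : p = q :=
  ((hT.existsUnique_path u v).unique hp hq)

lemma length_path_eq_dist {u v : V} {p : T.Walk u v} (hp : p.IsPath) :
    p.length = T.dist u v := by
  obtain ⟨q, hq, hq'⟩ := hT.isConnected.exists_path_of_dist u v
  rw [path_unique hT hp hq, hq']

lemma exists_path (u v : V) : ∃ p : T.Walk u v, p.IsPath := by
  obtain ⟨q, hq, -⟩ := hT.isConnected.exists_path_of_dist u v
  exact ⟨q, hq⟩

lemma dist_add_of_mem_support {u v m : V} {p : T.Walk u v} (hp : p.IsPath)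
    (hm : m ∈ p.support) : T.dist u v = T.dist u m + T.dist m v := by
  classical
  have h := p.take_spec hm
  have h1 : (p.takeUntil m hm).length = T.dist u m :=
    length_path_eq_dist hT (hp.takeUntil hm)
  have h2 : (p.dropUntil m hm).length = T.dist m v :=
    length_path_eq_dist hT (hp.dropUntil hm)
  have h3 : p.length = T.dist u v := length_path_eq_dist hT hp
  have := congrArg Walk.length h
  rw [Walk.length_append, h1, h2, h3] at this
  omega

lemma adj_dist_cases {x y : V} (h : T.Adj x y) (z : V) :
    T.dist z y = T.dist z x + 1 ∨ T.dist z x = T.dist z y + 1 := by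
  classical
  obtain ⟨p, hp⟩ := exists_path hT z x
  by_cases hy : y ∈ p.support
  · right
    have := dist_add_of_mem_support hT hp hy
    have hyx : T.dist y x = 1 := by
      rw [SimpleGraph.dist_eq_one_iff_adj]; exact h.symm
    omega
  · left
    have hq : (p.concat h).IsPath := by
      rw [← Walk.isPath_reverse_iff, Walk.reverse_concat]
      rw [Walk.cons_isPath_iff _ _, Walk.isPath_reverse_iff, Walk.support_reverse]
      exact ⟨hp, by simpa using hy⟩
    have := length_path_eq_dist hT hq
    rw [Walk.length_concat] at this
    have := length_path_eq_dist hT hp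
    omega

lemma adj_dist_ne {x y : V} (h : T.Adj x y) (z : V) : T.dist z x ≠ T.dist z y := by
  rcases adj_dist_cases hT h z with h' | h' <;> omega

/-- the second vertex towards a target -/
lemma exists_toward {u v : V} (huv : u ≠ v) :
    ∃ y, T.Adj u y ∧ T.dist u v = T.dist y v + 1 := by
  obtain ⟨p, hp⟩ := exists_path hT u v
  cases p with
  | nil => exact absurd rfl huv
  | cons h q =>
    refine ⟨_, h, ?_⟩
    have hq : q.IsPath := ((Walk.cons_isPath_iff _ _).mp hp).1
    have h1 := length_path_eq_dist hT hp
    have h2 := length_path_eq_dist hT hq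
    rw [Walk.length_cons] at h1
    omega

/-- unique neighbor in a given direction -/
lemma toward_unique {x w z₁ z₂ : V} (h₁ : T.Adj z₁ w) (h₂ : T.Adj z₂ w)
    (hd₁ : T.dist x w = T.dist x z₁ + 1) (hd₂ : T.dist x w = T.dist x z₂ + 1) :
    z₁ = z₂ := by
  classical
  obtain ⟨p₁, hp₁⟩ := exists_path hT x z₁
  obtain ⟨p₂, hp₂⟩ := exists_path hT x z₂
  have hw₂ : w ∉ p₂.support := by
    intro hw
    have := dist_add_of_mem_support hT hp₂ hw
    have hwz : T.dist w z₂ = 1 := by rw [SimpleGraph.dist_eq_one_iff_adj]; exact h₂.symm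
    omega
  have hq₂ : (p₂.concat h₂).IsPath := by
    rw [← Walk.isPath_reverse_iff, Walk.reverse_concat, Walk.cons_isPath_iff _ _,
      Walk.isPath_reverse_iff, Walk.support_reverse]
    exact ⟨hp₂, by simpa using hw₂⟩
  have hw₁ : w ∉ p₁.support := by
    intro hw
    have := dist_add_of_mem_support hT hp₁ hw
    have hwz : T.dist w z₁ = 1 := by rw [SimpleGraph.dist_eq_one_iff_adj]; exact h₁.symm
    omega
  have hq₁ : (p₁.concat h₁).IsPath := by
    rw [← Walk.isPath_reverse_iff, Walk.reverse_concat, Walk.cons_isPath_iff _ _,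
      Walk.isPath_reverse_iff, Walk.support_reverse]
    exact ⟨hp₁, by simpa using hw₁⟩
  have heq : p₁.concat h₁ = p₂.concat h₂ := path_unique hT hq₁ hq₂
  -- z₁ lies on the support of p₂.concat h₂, hence on p₂'s support (it's not w)
  have hz₁ : z₁ ∈ (p₂.concat h₂).support := by
    rw [← heq, Walk.support_concat]
    simp
  rw [Walk.support_concat, List.mem_append] at hz₁
  have hz₁' : z₁ ∈ p₂.support := by
    rcases hz₁ with h' | h'
    · exact h'
    · simp at h'
      exact absurd h' h₁.ne
  have := dist_add_of_mem_support hT hp₂ hz₁'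
  have hz : T.dist z₁ z₂ = 0 := by omega
  have : T.Reachable z₁ z₂ := hT.isConnected z₁ z₂
  exact (this.dist_eq_zero_iff).mp hz

end Tree

end LocAux

namespace LocAux

open SimpleGraph Walk Set

section Closure

variable {V : Type*} {T : SimpleGraph V}

lemma dist_comm' (T : SimpleGraph V) (x y : V) : T.dist x y = T.dist y x :=
  SimpleGraph.dist_comm

/-- a walk from inside a closed set to outside must pass through the boundary vertex. -/
lemma mem_support_of_closure {S : Set V} {b : V}
    (hcl : ∀ x ∈ S, x ≠ b → ∀ z, T.Adj x z → z ∈ S)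
    {x z : V} (hx : x ∈ S) (hz : z ∉ S) (p : T.Walk x z) : b ∈ p.support := by
  induction p with
  | nil => exact absurd hx hz
  | @cons u y w h q ih =>
    by_cases hub : u = b
    · rw [Walk.support_cons]; subst hub; exact List.mem_cons_self
    · have hy : y ∈ S := hcl u hx hub y h
      rw [Walk.support_cons]
      exact List.mem_cons_of_mem _ (ih hy hz)

variable (hT : T.IsTree)
include hT

lemma dist_add_of_closure {S : Set V} {b : V}
    (hcl : ∀ x ∈ S, x ≠ b → ∀ z, T.Adj x z → z ∈ S)
    {x z : V} (hx : x ∈ S) (hz : z ∉ S) : T.dist x z = T.dist x b + T.dist b z := by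
  obtain ⟨p, hp⟩ := exists_path hT x z
  exact dist_add_of_mem_support hT hp (mem_support_of_closure hcl hx hz p)

end Closure

/-! ### Sides of an edge in a tree -/

/-- The set of vertices strictly closer to `a` than to `b`. For an edge `(a,b)` of a tree
this is the component of `a` after deleting the edge. -/
def Side {V : Type*} (T : SimpleGraph V) (a b : V) : Set V := {x | T.dist x a < T.dist x b}

section Side

variable {V : Type*} {T : SimpleGraph V} (hT : T.IsTree)
include hT

lemma mem_side_iff {a b x : V} (h : T.Adj a b) :
    x ∈ Side T a b ↔ T.dist x b = T.dist x a + 1 := by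
  constructor
  · intro hx
    rcases adj_dist_cases hT h x with h' | h'
    · exact h'
    · exact absurd hx (by simp [Side]; omega)
  · intro hx
    simp [Side]; omega

lemma not_side_iff {a b x : V} (h : T.Adj a b) :
    x ∉ Side T a b ↔ x ∈ Side T b a := by
  rcases adj_dist_cases hT h x with h' | h' <;> simp [Side] <;> omega

lemma side_start {a b : V} (h : T.Adj a b) : a ∈ Side T a b := by
  have : T.dist a b = 1 := by rwa [SimpleGraph.dist_eq_one_iff_adj]
  simp [Side, this]

lemma side_disjoint {a b x : V} (h : T.Adj a b) (h1 : x ∈ Side T a b) (h2 : x ∈ Side T b a) :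
    False := by
  simp [Side] at h1 h2; omega

/-- crossing an edge: the only edge from `Side a b` to `Side b a` is `(a,b)` itself. -/
lemma side_crossing_edge {a b x z : V} (h : T.Adj a b) (hx : x ∈ Side T a b)
    (hz : z ∉ Side T a b) (hadj : T.Adj x z) : x = a ∧ z = b := by
  classical
  rw [not_side_iff hT h] at hz
  rw [mem_side_iff hT h] at hx
  rw [mem_side_iff hT h.symm] at hz
  -- dist relations
  have hda : T.dist z a = T.dist x a + 1 := by
    rcases adj_dist_cases hT hadj a with h' | h' <;>
    rcases adj_dist_cases hT hadj b with h'' | h'' <;>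
    rw [dist_comm' T a x, dist_comm' T a z] at h' <;>
    rw [dist_comm' T b x, dist_comm' T b z] at h'' <;> omega
  have hdb : T.dist z b = T.dist x a := by
    rcases adj_dist_cases hT hadj b with h'' | h'' <;>
    rw [dist_comm' T b x, dist_comm' T b z] at h'' <;> omega
  -- build two paths from x to b and compare
  obtain ⟨P, hP⟩ := exists_path hT x a
  obtain ⟨Q, hQ⟩ := exists_path hT z b
  have hbP : b ∉ P.support := by
    intro hmem
    have := dist_add_of_mem_support hT hP hmem
    rw [dist_comm' T b a] at this
    have hab : T.dist a b = 1 := by rwa [SimpleGraph.dist_eq_one_iff_adj]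
    omega
  have hxQ : x ∉ Q.support := by
    intro hmem
    have := dist_add_of_mem_support hT hQ hmem
    omega
  have hP' : (P.concat h).IsPath := by
    rw [← Walk.isPath_reverse_iff, Walk.reverse_concat, Walk.cons_isPath_iff _ _,
      Walk.isPath_reverse_iff, Walk.support_reverse]
    exact ⟨hP, by simpa using hbP⟩
  have hQ' : (Walk.cons hadj Q).IsPath := by
    rw [Walk.cons_isPath_iff _ _]
    exact ⟨hQ, hxQ⟩
  have heq : P.concat h = Walk.cons hadj Q := path_unique hT hP' hQ'
  -- z is on the support of the lhs
  have hzsup : z ∈ (P.concat h).support := by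
    rw [heq, Walk.support_cons]; exact List.mem_cons_of_mem _ Q.start_mem_support
  rw [Walk.support_concat, List.mem_append] at hzsup
  rcases hzsup with h' | h'
  · exfalso
    have := dist_add_of_mem_support hT hP h'
    omega
  · simp at h'
    subst h'
    constructor
    · -- z = b , so dist x a = dist z b = dist b b = 0
      have : T.dist x a = 0 := by rw [← hdb]; simp
      have : x = a := by
        have hr : T.Reachable x a := hT.isConnected x a
        exact hr.dist_eq_zero_iff.mp this
      exact this
    · rfl

/-- a walk from `Side a b` to outside passes through both `a` and `b`. -/
lemma side_walk_mem {a b x z : V} (h : T.Adj a b) (hx : x ∈ Side T a b)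
    (hz : z ∉ Side T a b) (p : T.Walk x z) : a ∈ p.support ∧ b ∈ p.support := by
  constructor
  · exact mem_support_of_closure
      (fun x' hx' hxa z' hadj => by
        by_contra hz'
        exact hxa (side_crossing_edge hT h hx' hz' hadj).1) hx hz p
  · -- consider the reversed walk from the b-side
    have hz' : z ∈ Side T b a := (not_side_iff hT h).mp hz
    have hx' : x ∉ Side T b a := fun hmem => side_disjoint hT h hx hmem
    have := mem_support_of_closure
      (fun x' hx' hxb z' hadj => by
        by_contra hz'
        exact hxb (side_crossing_edge hT h.symm hx' hz' hadj).1) hz' hx' p.reverse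
    rwa [Walk.support_reverse, List.mem_reverse] at this

lemma dist_add_crossing {a b x z : V} (h : T.Adj a b) (hx : x ∈ Side T a b)
    (hz : z ∈ Side T b a) :
    T.dist x z = T.dist x a + T.dist a z ∧ T.dist x z = T.dist x b + T.dist b z := by
  obtain ⟨p, hp⟩ := exists_path hT x z
  have hz' : z ∉ Side T a b := fun hmem => side_disjoint hT h hmem hz
  obtain ⟨ha, hbb⟩ := side_walk_mem hT h hx hz' p
  exact ⟨dist_add_of_mem_support hT hp ha, dist_add_of_mem_support hT hp hbb⟩

/-- in the `a`-side of an edge `(a,b)` there is a leaf. -/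
lemma exists_leaf_side [Fintype V] [DecidableRel T.Adj] {a b : V} (h : T.Adj a b) :
    ∃ ℓ ∈ Side T a b, T.degree ℓ = 1 := by
  classical
  -- pick the vertex of the side farthest from b
  have hne : (Side T a b).toFinset.Nonempty := by
    rw [Set.toFinset_nonempty]
    exact ⟨a, side_start hT h⟩
  obtain ⟨ℓ, hℓmem, hℓmax⟩ := (Side T a b).toFinset.exists_max_image (fun x => T.dist x b) hne
  rw [Set.mem_toFinset] at hℓmem
  refine ⟨ℓ, hℓmem, ?_⟩
  have hℓb : ℓ ≠ b := by
    intro hh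
    subst hh
    exact side_disjoint hT h hℓmem (side_start hT h.symm)
  obtain ⟨y, hy, hyd⟩ := exists_toward hT hℓb
  -- every neighbor z of ℓ satisfies dist z b = dist ℓ b - 1
  have key : ∀ z, T.Adj ℓ z → T.dist ℓ b = T.dist z b + 1 := by
    intro z hz
    rcases adj_dist_cases hT hz b with h' | h'
    · -- dist z b = dist ℓ b + 1 : z would be deeper in the side
      exfalso
      have hzside : z ∈ Side T a b := by
        rw [mem_side_iff hT h] at hℓmem ⊢
        rw [dist_comm' T b z, dist_comm' T b ℓ] at h'
        have htri : T.dist z a ≤ T.dist z ℓ + T.dist ℓ a := hT.isConnected.dist_triangle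
        have hzl : T.dist z ℓ = 1 := by rw [SimpleGraph.dist_eq_one_iff_adj]; exact hz.symm
        have htri2 : T.dist z b ≤ T.dist z a + 1 := by
          have hab1 : T.dist a b = 1 := by rwa [SimpleGraph.dist_eq_one_iff_adj]
          have := hT.isConnected.dist_triangle (u := z) (v := a) (w := b)
          omega
        omega
      have := hℓmax z (by rwa [Set.mem_toFinset])
      rw [dist_comm' T b z, dist_comm' T b ℓ] at h'
      omega
    · rw [dist_comm' T b z, dist_comm' T b ℓ] at h'
      omega
  -- hence all neighbors are equal to y
  have huniq : ∀ z, T.Adj ℓ z → z = y := by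
    intro z hz
    refine toward_unique hT (x := b) hz.symm hy.symm ?_ ?_
    · rw [dist_comm' T b ℓ, dist_comm' T b z, key z hz]
    · rw [dist_comm' T b ℓ, dist_comm' T b y, key y hy]
  have : T.neighborFinset ℓ = {y} := by
    apply Finset.eq_singleton_iff_unique_mem.mpr
    constructor
    · rw [SimpleGraph.mem_neighborFinset]; exact hy
    · intro z hz
      rw [SimpleGraph.mem_neighborFinset] at hz
      exact huniq z hz
  rw [← SimpleGraph.card_neighborFinset_eq_degree, this, Finset.card_singleton]

end Side

end LocAux

namespace LocAux

open SimpleGraph Walk Set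

section EndPath

variable {V : Type*} [Fintype V] {T : SimpleGraph V} [DecidableRel T.Adj]

lemma endpath_ne {u v : V} {p : T.Walk u v} (hp : IsEndPath T p) : u ≠ v := by
  intro h
  obtain ⟨-, h1, h3, -⟩ := hp
  rw [h] at h1
  omega

lemma endpath_support_deg {u v x : V} {p : T.Walk u v} (hp : IsEndPath T p)
    (hx : x ∈ p.support) : x = v ∨ T.degree x ≤ 2 := by
  obtain ⟨-, h1, -, h4⟩ := hp
  by_cases hxv : x = v
  · exact Or.inl hxv
  · by_cases hxu : x = u
    · subst hxu; right; omega
    · right; rw [h4 x hx hxu hxv]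

/-- the first (second, …) neighbor of a vertex inside a nontrivial walk starting there -/
lemma second_vertex {x y : V} (p : T.Walk x y) (hxy : x ≠ y) :
    ∃ z, T.Adj x z ∧ z ∈ p.support ∧ (p.IsPath → z ∈ p.support.tail) := by
  cases p with
  | nil => exact absurd rfl hxy
  | cons h q =>
    refine ⟨_, h, ?_, ?_⟩
    · rw [Walk.support_cons]; exact List.mem_cons_of_mem _ q.start_mem_support
    · intro _; rw [Walk.support_cons]; exact q.start_mem_support

/-- an internal vertex of a path has at least two distinct neighbors in its support -/
lemma internal_two_neighbors (hT : T.IsTree) {u v x : V} {p : T.Walk u v} (hp : p.IsPath)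
    (hx : x ∈ p.support) (hxu : x ≠ u) (hxv : x ≠ v) :
    ∃ a b, a ≠ b ∧ T.Adj x a ∧ T.Adj x b ∧ a ∈ p.support ∧ b ∈ p.support := by
  classical
  set q₁ := p.takeUntil x hx with hq₁
  set q₂ := p.dropUntil x hx with hq₂
  obtain ⟨a, ha, has, -⟩ := second_vertex q₁.reverse hxu
  obtain ⟨b, hb, hbs, hbt⟩ := second_vertex q₂ hxv
  rw [Walk.support_reverse, List.mem_reverse] at has
  refine ⟨a, b, ?_, ha, hb, (p.support_takeUntil_subset hx) has, (p.support_dropUntil_subset hx) hbs⟩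
  -- a ≠ b from nodup of p.support
  intro hab
  subst hab
  have hspec := p.take_spec hx
  have hnodup : (q₁.append q₂).support.Nodup := by rw [hspec]; exact hp.support_nodup
  rw [Walk.support_append] at hnodup
  have hdisj := List.disjoint_of_nodup_append hnodup
  exact hdisj has (hbt ((hp.dropUntil hx)))

/-- S1 : an end-path is closed except at its branch endpoint -/
lemma endpath_closure (hT : T.IsTree) {u v x z : V} {p : T.Walk u v} (hp : IsEndPath T p)
    (hx : x ∈ p.support) (hxv : x ≠ v) (hz : T.Adj x z) : z ∈ p.support := by
  classical
  obtain ⟨hpath, h1, h3, h4⟩ := hp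
  by_cases hxu : x = u
  · -- degree 1
    subst hxu
    obtain ⟨b, hb, hbs, -⟩ := second_vertex p (endpath_ne ⟨hpath, h1, h3, h4⟩)
    have hcard : (T.neighborFinset x).card = 1 := by
      rw [SimpleGraph.card_neighborFinset_eq_degree, h1]
    obtain ⟨c, hc⟩ := Finset.card_eq_one.mp hcard
    have hbc : b = c := by
      have : b ∈ T.neighborFinset x := by rwa [SimpleGraph.mem_neighborFinset]
      rwa [hc, Finset.mem_singleton] at this
    have hzmem : z ∈ T.neighborFinset x := by rwa [SimpleGraph.mem_neighborFinset]
    rw [hc, Finset.mem_singleton] at hzmem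
    subst hzmem; rw [← hbc] at *; exact hbs
  · obtain ⟨a, b, hab, ha, hb, has, hbs⟩ := internal_two_neighbors hT hpath hx hxu hxv
    have hdeg := h4 x hx hxu hxv
    have hsub : {a, b} ⊆ T.neighborFinset x := by
      intro w hw
      rw [SimpleGraph.mem_neighborFinset]
      rcases Finset.mem_insert.mp hw with h' | h'
      · subst h'; exact ha
      · rw [Finset.mem_singleton] at h'; subst h'; exact hb
    have : T.neighborFinset x = {a, b} := by
      apply (Finset.eq_of_subset_of_card_le hsub ?_).symm
      rw [SimpleGraph.card_neighborFinset_eq_degree, hdeg, Finset.card_insert_of_notMem (by simpa using hab), Finset.card_singleton]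
    have hzmem : z ∈ T.neighborFinset x := by rwa [SimpleGraph.mem_neighborFinset]
    rw [this] at hzmem
    rcases Finset.mem_insert.mp hzmem with h' | h'
    · subst h'; exact has
    · rw [Finset.mem_singleton] at h'; subst h'; exact hbs

end EndPath

end LocAux

namespace LocAux

open SimpleGraph Walk Set

section Palm

variable {V : Type*} [Fintype V] {T : SimpleGraph V} [DecidableRel T.Adj]

lemma mem_endPalm_iff {v x : V} : x ∈ endPalm T v ↔
    x = v ∨ ∃ (u : V) (p : T.Walk u v), IsEndPath T p ∧ x ∈ p.support := Iff.rfl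

lemma self_mem_endPalm {v : V} : v ∈ endPalm T v := Or.inl rfl

lemma support_subset_endPalm {u v : V} {p : T.Walk u v} (hp : IsEndPath T p) :
    ∀ x ∈ p.support, x ∈ endPalm T v := fun x hx => Or.inr ⟨u, p, hp, hx⟩

lemma endbranch_deg {v : V} (h : IsEndBranch T v) : 3 ≤ T.degree v := by
  obtain ⟨u₁, u₂, p₁, p₂, h12, hp₁, hp₂⟩ := h
  exact hp₁.2.2.1

lemma deg_le_two_of_mem_endPalm {v x : V} (hx : x ∈ endPalm T v) (hxv : x ≠ v) :
    T.degree x ≤ 2 := by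
  rcases hx with h | ⟨u, p, hp, hmem⟩
  · exact absurd h hxv
  · rcases endpath_support_deg hp hmem with h | h
    · exact absurd h hxv
    · exact h

lemma endPalm_closure (hT : T.IsTree) {v x z : V} (hx : x ∈ endPalm T v) (hxv : x ≠ v)
    (hz : T.Adj x z) : z ∈ endPalm T v := by
  rcases hx with h | ⟨u, p, hp, hmem⟩
  · exact absurd h hxv
  · exact support_subset_endPalm hp z (endpath_closure hT hp hmem hxv hz)

lemma endPalm_sep (hT : T.IsTree) {v x z : V} (hx : x ∈ endPalm T v)
    (hz : z ∉ endPalm T v) : T.dist x z = T.dist x v + T.dist v z :=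
  dist_add_of_closure hT (fun x' hx' hxv' z' hadj => endPalm_closure hT hx' hxv' hadj) hx hz

lemma endpath_sep (hT : T.IsTree) {w x z : V} {ℓ : V} {p : T.Walk ℓ w} (hp : IsEndPath T p)
    (hx : x ∈ p.support) (hz : z ∉ p.support) : T.dist x z = T.dist x w + T.dist w z :=
  dist_add_of_closure hT
    (fun x' hx' hxv' z' hadj => endpath_closure hT hp hx' hxv' hadj) hx hz

/-- the palms of distinct end-branches are disjoint. -/
lemma endPalm_disjoint (hT : T.IsTree) {v v' x : V} (hv : IsEndBranch T v)
    (hv' : IsEndBranch T v') (hx : x ∈ endPalm T v) (hx' : x ∈ endPalm T v') : v = v' := by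
  by_contra hne
  have hdegv := endbranch_deg hv
  have hdegv' := endbranch_deg hv'
  have hnv : v ∉ endPalm T v' := by
    intro hmem
    exact absurd (deg_le_two_of_mem_endPalm hmem hne) (by omega)
  have hnv' : v' ∉ endPalm T v := by
    intro hmem
    exact absurd (deg_le_two_of_mem_endPalm hmem (Ne.symm hne)) (by omega)
  have e1 : T.dist x v' = T.dist x v + T.dist v v' := endPalm_sep hT hx hnv'
  have e2 : T.dist x v = T.dist x v' + T.dist v' v := endPalm_sep hT hx' hnv
  have hpos : 0 < T.dist v v' := hT.isConnected.pos_dist_of_ne hne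
  rw [dist_comm' T v' v] at e2
  omega

end Palm

end LocAux

namespace LocAux

open SimpleGraph Walk Set

section ClaimB

variable {V : Type*} [Fintype V] {T : SimpleGraph V} [DecidableRel T.Adj]

lemma two_le_degree_of_adj {x a b : V} (hab : a ≠ b) (ha : T.Adj x a) (hb : T.Adj x b) :
    2 ≤ T.degree x := by
  classical
  have hsub : {a, b} ⊆ T.neighborFinset x := by
    intro t ht
    rw [SimpleGraph.mem_neighborFinset]
    rcases Finset.mem_insert.mp ht with h' | h'
    · subst h'; exact ha
    · rw [Finset.mem_singleton] at h'; subst h'; exact hb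
  calc (2 : ℕ) = ({a, b} : Finset V).card := by
        rw [Finset.card_insert_of_notMem (by simpa using hab), Finset.card_singleton]
  _ ≤ (T.neighborFinset x).card := Finset.card_le_card hsub
  _ = T.degree x := T.card_neighborFinset_eq_degree x

/-- only one neighbor of the endpoint of a path lies on the path -/
lemma support_neighbor_unique (hT : T.IsTree) {ℓ w : V} {p : T.Walk ℓ w} (hp : p.IsPath)
    {z₁ z₂ : V} (h₁ : T.Adj z₁ w) (h₂ : T.Adj z₂ w)
    (m₁ : z₁ ∈ p.support) (m₂ : z₂ ∈ p.support) : z₁ = z₂ := by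
  have d₁ := dist_add_of_mem_support hT hp m₁
  have d₂ := dist_add_of_mem_support hT hp m₂
  have e₁ : T.dist z₁ w = 1 := by rw [SimpleGraph.dist_eq_one_iff_adj]; exact h₁
  have e₂ : T.dist z₂ w = 1 := by rw [SimpleGraph.dist_eq_one_iff_adj]; exact h₂
  exact toward_unique hT h₁ h₂ (x := ℓ) (by omega) (by omega)

lemma exists_two_neighbors_off_path (hT : T.IsTree) {ℓ w : V} {p : T.Walk ℓ w}
    (hp : p.IsPath) (hdeg : 3 ≤ T.degree w) :
    ∃ z₁ z₂, z₁ ≠ z₂ ∧ T.Adj z₁ w ∧ T.Adj z₂ w ∧ z₁ ∉ p.support ∧ z₂ ∉ p.support := by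
  classical
  set N := T.neighborFinset w with hN
  set Nin := N.filter (fun z => z ∈ p.support) with hNin
  set Nout := N.filter (fun z => z ∉ p.support) with hNout
  have hinle : Nin.card ≤ 1 := by
    apply Finset.card_le_one.mpr
    intro x hx y hy
    rw [hNin, Finset.mem_filter, SimpleGraph.mem_neighborFinset] at hx hy
    exact support_neighbor_unique hT hp hx.1.symm hy.1.symm hx.2 hy.2
  have hsplit : Nin.card + Nout.card = N.card := by
    rw [hNin, hNout]
    exact Finset.card_filter_add_card_filter_not (fun z => z ∈ p.support)
  have hNcard : N.card = T.degree w := T.card_neighborFinset_eq_degree w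
  have h2 : 2 ≤ Nout.card := by omega
  obtain ⟨z₁, hz₁, z₂, hz₂, hne⟩ := Finset.one_lt_card.mp (show 1 < Nout.card by omega)
  rw [hNout, Finset.mem_filter, SimpleGraph.mem_neighborFinset] at hz₁ hz₂
  exact ⟨z₁, z₂, hne, hz₁.1.symm, hz₂.1.symm, hz₁.2, hz₂.2⟩

/-- if every vertex of a side is of degree ≤ 2 and it hangs on a branch, the side
together with the branch carries an end-path. -/
lemma endpath_of_chain_side (hT : T.IsTree) {z w : V} (h : T.Adj z w)
    (hdeg2 : ∀ x ∈ Side T z w, T.degree x ≤ 2) (hw : 3 ≤ T.degree w) :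
    ∃ (ℓ : V) (P : T.Walk ℓ w), IsEndPath T P ∧ ℓ ∈ Side T z w := by
  classical
  obtain ⟨ℓ, hℓs, hℓ1⟩ := exists_leaf_side hT h
  obtain ⟨P, hP⟩ := exists_path hT ℓ w
  have hwout : w ∉ Side T z w := by
    intro hmem
    exact side_disjoint hT h hmem (side_start hT h.symm)
  have hsup : ∀ x ∈ P.support, x ≠ w → x ∈ Side T z w := by
    intro x hx hxw
    by_contra hxout
    have hpre := hP.takeUntil hx
    have hmem := (side_walk_mem hT h hℓs hxout (P.takeUntil x hx)).2
    -- w appears both in the prefix and as last vertex : contradiction with nodup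
    have hspec := P.take_spec hx
    have hnodup : ((P.takeUntil x hx).append (P.dropUntil x hx)).support.Nodup := by
      rw [hspec]; exact hP.support_nodup
    rw [Walk.support_append] at hnodup
    have hdisj := List.disjoint_of_nodup_append hnodup
    have hw2 : w ∈ (P.dropUntil x hx).support := Walk.end_mem_support _
    rw [Walk.support_eq_cons (P.dropUntil x hx)] at hw2
    rcases List.mem_cons.mp hw2 with h' | h'
    · exact hxw h'.symm
    · exact hdisj hmem h'
  refine ⟨ℓ, P, ⟨hP, hℓ1, hw, ?_⟩, hℓs⟩
  intro x hx hxℓ hxw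
  have hle : T.degree x ≤ 2 := hdeg2 x (hsup x hx hxw)
  obtain ⟨a, b, hab, ha, hb, -, -⟩ := internal_two_neighbors hT hP hx hxℓ hxw
  have := two_le_degree_of_adj hab ha hb
  omega

/-- if a side contains no end-branch then every vertex in it has degree ≤ 2. -/
lemma no_branch_in_side (hT : T.IsTree) {a b : V} (h : T.Adj a b)
    (hnb : ∀ x, IsEndBranch T x → x ∉ Side T a b) :
    ∀ x ∈ Side T a b, T.degree x ≤ 2 := by
  classical
  by_contra hcon
  push_neg at hcon
  obtain ⟨x₀, hx₀s, hx₀d⟩ := hcon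
  -- choose the branch in the side farthest from b
  set Sb := (Side T a b).toFinset.filter (fun x => 3 ≤ T.degree x) with hSb
  have hSbne : Sb.Nonempty := ⟨x₀, by
    rw [hSb, Finset.mem_filter, Set.mem_toFinset]
    exact ⟨hx₀s, by omega⟩⟩
  obtain ⟨w, hwmem, hwmax⟩ := Sb.exists_max_image (fun x => T.dist x b) hSbne
  rw [hSb, Finset.mem_filter, Set.mem_toFinset] at hwmem
  obtain ⟨hws, hwdeg⟩ := hwmem
  -- w ≠ b
  have hwb : w ≠ b := by
    intro hh; subst hh
    exact side_disjoint hT h hws (side_start hT h.symm)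
  obtain ⟨y, hy, hyd⟩ := exists_toward hT hwb
  -- each neighbor z ≠ y of w is farther from b and lies in the side
  have hz_side : ∀ z, T.Adj w z → z ≠ y → T.dist z b = T.dist w b + 1 ∧ z ∈ Side T a b := by
    intro z hz hzy
    have hd : T.dist z b = T.dist w b + 1 := by
      rcases adj_dist_cases hT hz b with h' | h'
      · rw [dist_comm' T b z, dist_comm' T b w] at h'; omega
      · exfalso
        refine hzy (toward_unique hT (x := b) hz.symm hy.symm h' ?_)
        rw [dist_comm' T b w, dist_comm' T b y]; omega
    refine ⟨hd, ?_⟩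
    rw [mem_side_iff hT h] at hws ⊢
    have htri : T.dist z a ≤ T.dist z w + T.dist w a := hT.isConnected.dist_triangle
    have hzw : T.dist z w = 1 := by rw [SimpleGraph.dist_eq_one_iff_adj]; exact hz.symm
    have hab1 : T.dist a b = 1 := by rwa [SimpleGraph.dist_eq_one_iff_adj]
    have htri2 : T.dist z b ≤ T.dist z a + T.dist a b := hT.isConnected.dist_triangle
    omega
  -- for each such z, the side of z away from w has small degree
  have hz_chain : ∀ z, T.Adj w z → z ≠ y → ∀ x ∈ Side T z w, T.degree x ≤ 2 := by
    intro z hz hzy x hxs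
    obtain ⟨hd, hzside⟩ := hz_side z hz hzy
    -- x ∈ Side T a b and dist x b > dist w b
    have hbmem : b ∈ Side T w z := by
      simp only [Side, Set.mem_setOf_eq]
      rw [dist_comm' T b w, dist_comm' T b z]
      omega
    obtain ⟨hcross, -⟩ := dist_add_crossing hT hz.symm hxs hbmem
    have hxb : T.dist x b = T.dist x z + T.dist z b := hcross
    have hxside : x ∈ Side T a b := by
      rw [mem_side_iff hT h] at hzside ⊢
      have htri : T.dist x a ≤ T.dist x z + T.dist z a := hT.isConnected.dist_triangle
      have hab1 : T.dist a b = 1 := by rwa [SimpleGraph.dist_eq_one_iff_adj]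
      have htri2 : T.dist x b ≤ T.dist x a + T.dist a b := hT.isConnected.dist_triangle
      omega
    by_contra hdeg
    have : x ∈ Sb := by
      rw [hSb, Finset.mem_filter, Set.mem_toFinset]
      exact ⟨hxside, by omega⟩
    have := hwmax x this
    omega
  -- pick two neighbors of w other than y, get two end-paths at w
  have hcard : 2 ≤ ((T.neighborFinset w).erase y).card := by
    have := Finset.card_erase_of_mem (by rwa [SimpleGraph.mem_neighborFinset] : y ∈ T.neighborFinset w)
    rw [this, T.card_neighborFinset_eq_degree]
    omega
  obtain ⟨z₁, hz₁, z₂, hz₂, hne⟩ := Finset.one_lt_card.mp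
    (show 1 < ((T.neighborFinset w).erase y).card by omega)
  rw [Finset.mem_erase, SimpleGraph.mem_neighborFinset] at hz₁ hz₂
  obtain ⟨ℓ₁, P₁, hP₁, hℓ₁⟩ := endpath_of_chain_side hT hz₁.2.symm
    (hz_chain z₁ hz₁.2 hz₁.1) hwdeg
  obtain ⟨ℓ₂, P₂, hP₂, hℓ₂⟩ := endpath_of_chain_side hT hz₂.2.symm
    (hz_chain z₂ hz₂.2 hz₂.1) hwdeg
  -- ℓ₁ ≠ ℓ₂ since the sides are disjoint
  have hll : ℓ₁ ≠ ℓ₂ := by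
    intro hh
    subst hh
    -- ℓ₁ in both Side z₁ w and Side z₂ w forces z₁ = z₂
    rw [mem_side_iff hT hz₁.2.symm] at hℓ₁
    rw [mem_side_iff hT hz₂.2.symm] at hℓ₂
    exact hne (toward_unique hT (x := ℓ₁) hz₁.2.symm hz₂.2.symm hℓ₁ hℓ₂)
  exact hnb w ⟨ℓ₁, ℓ₂, P₁, P₂, hll, hP₁, hP₂⟩ hws

/-- Claim B : if the side of `a` contains no end-branch, then `a` lies on an end-path whose
branch endpoint is outside the side. -/
lemma claimB (hT : T.IsTree) {a b : V} (h : T.Adj a b)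
    (hnb : ∀ x, IsEndBranch T x → x ∉ Side T a b)
    (hex : ∃ v₀, IsEndBranch T v₀) :
    ∃ (ℓ w : V) (P : T.Walk ℓ w), IsEndPath T P ∧ a ∈ P.support ∧ w ∉ Side T a b := by
  classical
  have hdeg2 := no_branch_in_side hT h hnb
  obtain ⟨ℓ, hℓs, hℓ1⟩ := exists_leaf_side hT h
  obtain ⟨v₀, hv₀⟩ := hex
  obtain ⟨P₀, hP₀⟩ := exists_path hT ℓ v₀
  -- first branch along P₀
  set cand := P₀.support.toFinset.filter (fun x => 3 ≤ T.degree x) with hcand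
  have hcandne : cand.Nonempty := ⟨v₀, by
    rw [hcand, Finset.mem_filter, List.mem_toFinset]
    exact ⟨Walk.end_mem_support _, endbranch_deg hv₀⟩⟩
  obtain ⟨w, hwmem, hwmin⟩ := cand.exists_min_image (fun x => T.dist ℓ x) hcandne
  rw [hcand, Finset.mem_filter, List.mem_toFinset] at hwmem
  obtain ⟨hwsup, hwdeg⟩ := hwmem
  set P := P₀.takeUntil w hwsup with hPdef
  have hP : P.IsPath := hP₀.takeUntil hwsup
  have hwout : w ∉ Side T a b := fun hmem => by
    have := hdeg2 w hmem
    omega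
  refine ⟨ℓ, w, P, ⟨hP, hℓ1, hwdeg, ?_⟩, ?_, hwout⟩
  · intro x hx hxℓ hxw
    have hxsub : x ∈ P₀.support := P₀.support_takeUntil_subset hwsup hx
    have hgood : T.degree x ≤ 2 := by
      by_contra hdd
      have hxc : x ∈ cand := by
        rw [hcand, Finset.mem_filter, List.mem_toFinset]
        exact ⟨hxsub, by omega⟩
      have hmin := hwmin x hxc
      have hsplit := dist_add_of_mem_support hT hP hx
      have hxw' : 0 < T.dist x w := hT.isConnected.pos_dist_of_ne hxw
      omega
    obtain ⟨c, d, hcd, hc, hd, -, -⟩ := internal_two_neighbors hT hP hx hxℓ hxw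
    have := two_le_degree_of_adj hcd hc hd
    omega
  · exact (side_walk_mem hT h hℓs hwout P).1

end ClaimB

end LocAux

namespace LocAux

open SimpleGraph Walk Set

section Induced

variable {V : Type*} {T : SimpleGraph V}

lemma induce_adj' {s : Set V} {a b : ↥s} : (T.induce s).Adj a b ↔ T.Adj a.val b.val := by
  simp [SimpleGraph.induce]

lemma lift_walk {s : Set V} {x y : V} (p : T.Walk x y)
    (hsup : ∀ m ∈ p.support, m ∈ s) (hx : x ∈ s) (hy : y ∈ s) :
    ∃ q : (T.induce s).Walk ⟨x, hx⟩ ⟨y, hy⟩, q.length = p.length := by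
  induction p with
  | nil =>
    exact ⟨Walk.nil, rfl⟩
  | @cons u m w h q ih =>
    have hm : m ∈ s := hsup m (by rw [Walk.support_cons]; exact List.mem_cons_of_mem _ q.start_mem_support)
    obtain ⟨q', hq'⟩ := ih (fun t ht => hsup t (by rw [Walk.support_cons]; exact List.mem_cons_of_mem _ ht)) hm hy
    refine ⟨Walk.cons (induce_adj'.mpr h) q', ?_⟩
    rw [Walk.length_cons, hq']
    rfl

lemma map_induce_walk_length {s : Set V} {a b : ↥s} (q : (T.induce s).Walk a b) :
    ∃ p : T.Walk a.val b.val, p.length = q.length := by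
  refine ⟨(q.map (SimpleGraph.Embedding.induce s).toHom).copy ?_ ?_, ?_⟩
  · rfl
  · rfl
  · exact (Walk.length_copy ..).trans (Walk.length_map ..)

variable [Fintype V] [DecidableRel T.Adj] (hT : T.IsTree)
include hT

lemma endPalm_convex {v x y : V} (hx : x ∈ endPalm T v) (hy : y ∈ endPalm T v)
    {p : T.Walk x y} (hp : p.IsPath) : ∀ m ∈ p.support, m ∈ endPalm T v := by
  classical
  intro m hm
  by_contra hout
  set q₁ := p.takeUntil m hm with hq₁
  set q₂ := p.dropUntil m hm with hq₂
  have hv₁ : v ∈ q₁.support :=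
    mem_support_of_closure (fun a ha hav z hz => endPalm_closure hT ha hav hz) hx hout q₁
  have hv₂ : v ∈ q₂.support := by
    have := mem_support_of_closure (fun a ha hav z hz => endPalm_closure hT ha hav hz)
      hy hout q₂.reverse
    rwa [Walk.support_reverse, List.mem_reverse] at this
  have hspec := p.take_spec hm
  have hnodup : (q₁.append q₂).support.Nodup := by rw [hspec]; exact hp.support_nodup
  rw [Walk.support_append] at hnodup
  have hdisj := List.disjoint_of_nodup_append hnodup
  rw [Walk.support_eq_cons q₂] at hv₂
  rcases List.mem_cons.mp hv₂ with h' | h'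
  · exact hout (h' ▸ self_mem_endPalm)
  · exact hdisj hv₁ h'

lemma induce_endPalm_dist {v x y : V} (hx : x ∈ endPalm T v) (hy : y ∈ endPalm T v) :
    (T.induce (endPalm T v)).dist ⟨x, hx⟩ ⟨y, hy⟩ = T.dist x y := by
  classical
  obtain ⟨p, hp, hlen⟩ := hT.isConnected.exists_path_of_dist x y
  obtain ⟨q, hq⟩ := lift_walk p (endPalm_convex hT hx hy hp) hx hy
  apply le_antisymm
  · calc (T.induce (endPalm T v)).dist ⟨x, hx⟩ ⟨y, hy⟩ ≤ q.length := SimpleGraph.dist_le q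
    _ = T.dist x y := by rw [hq, hlen]
  · have hreach : (T.induce (endPalm T v)).Reachable ⟨x, hx⟩ ⟨y, hy⟩ := ⟨q⟩
    obtain ⟨q', hq'len⟩ := hreach.exists_walk_length_eq_dist
    obtain ⟨p', hp'⟩ := map_induce_walk_length q'
    calc T.dist x y ≤ p'.length := SimpleGraph.dist_le p'
    _ = (T.induce (endPalm T v)).dist ⟨x, hx⟩ ⟨y, hy⟩ := by rw [hp', hq'len]

lemma induce_endPalm_connected {v : V} : (T.induce (endPalm T v)).Connected := by
  classical
  rw [SimpleGraph.connected_iff]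
  constructor
  · rintro ⟨x, hx⟩ ⟨y, hy⟩
    obtain ⟨p, hp⟩ := exists_path hT x y
    obtain ⟨q, -⟩ := lift_walk p (endPalm_convex hT hx hy hp) hx hy
    exact ⟨q⟩
  · exact ⟨⟨v, self_mem_endPalm⟩⟩

end Induced

end LocAux

namespace LocAux

open SimpleGraph Walk Set

section Locating

variable {W : Type*} {G : SimpleGraph W}

lemma distToSet_singleton (u z : W) : distToSet G u {z} = G.dist u z := by
  unfold distToSet
  rw [Set.image_singleton, csInf_singleton]

/-- any connected finite graph admits a locating coloring with all colors distinct. -/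
lemma exists_locating_coloring [Fintype W] (hconn : G.Connected) :
    ∃ c : W → Fin (Fintype.card W), IsLocatingColoring G c := by
  classical
  refine ⟨Fintype.equivFin W, ?_, ?_⟩
  · intro u v huv
    exact fun h => huv.ne ((Fintype.equivFin W).injective h)
  · intro u v huv
    refine ⟨Fintype.equivFin W u, ?_⟩
    have hpre : (⇑(Fintype.equivFin W)) ⁻¹' {Fintype.equivFin W u} = {u} := by
      ext t
      simp [Equiv.apply_eq_iff_eq]
    rw [hpre, distToSet_singleton, distToSet_singleton]
    rw [SimpleGraph.dist_self]
    have : 0 < G.dist v u := (hconn v u).pos_dist_of_ne (Ne.symm huv)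
    omega

/-- a connected graph with at least 3 vertices cannot have all its vertices located by
only two nonempty color classes: there is a nonempty class besides any two given ones. -/
lemma exists_third_class [Fintype W] (hconn : G.Connected) {x y z : W}
    (hxy : x ≠ y) (hxz : x ≠ z) (hyz : y ≠ z) {k : ℕ} {c : W → Fin k}
    (hc : IsLocatingColoring G c) (a b : Fin k) :
    ∃ m : Fin k, m ≠ a ∧ m ≠ b ∧ (c ⁻¹' {m}).Nonempty := by
  classical
  by_contra hcon
  push_neg at hcon
  -- all vertices are colored a or b
  have hcol : ∀ w : W, c w = a ∨ c w = b := by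
    intro w
    by_contra h
    push_neg at h
    have h0 := hcon (c w) h.1 h.2
    have hmem : w ∈ c ⁻¹' {c w} := rfl
    rw [h0] at hmem
    exact hmem
  -- every vertex has a neighbor
  have hnbr : ∀ w : W, ∃ t, G.Adj w t := by
    intro w
    have hex : ∃ t : W, t ≠ w := by
      by_cases h : x = w
      · exact ⟨y, by rw [← h]; exact Ne.symm hxy⟩
      · exact ⟨x, h⟩
    obtain ⟨t, ht⟩ := hex
    obtain ⟨p, hp⟩ := (hconn w t).exists_walk_length_eq_dist
    cases p with
    | nil => exact absurd rfl (Ne.symm ht)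
    | cons h q => exact ⟨_, h⟩
  have hab : a ≠ b := by
    rintro rfl
    obtain ⟨t, ht⟩ := hnbr x
    have := hc.1 x t ht
    rcases hcol x with h1 | h1 <;> rcases hcol t with h2 | h2 <;> simp_all
  -- profile of each vertex is determined by its color
  have hprof : ∀ (w : W) (m : Fin k), distToSet G w (c ⁻¹' {m}) =
      if m = c w then 0 else if m = a ∨ m = b then 1 else 0 := by
    intro w m
    by_cases hm : m = c w
    · rw [if_pos hm]
      exact distToSet_eq_zero_of_mem (by simp [hm])
    · rw [if_neg hm]
      by_cases hm2 : m = a ∨ m = b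
      · rw [if_pos hm2]
        -- the class of m contains a neighbor of w
        obtain ⟨t, ht⟩ := hnbr w
        have hct : c t ≠ c w := Ne.symm (hc.1 w t ht)
        have htm : c t = m := by
          rcases hcol w with h1 | h1 <;> rcases hcol t with h2 | h2 <;>
            rcases hm2 with h3 | h3 <;> simp_all
        apply le_antisymm
        · calc distToSet G w (c ⁻¹' {m}) ≤ G.dist w t := distToSet_le (by simp [htm])
            _ = 1 := by rw [SimpleGraph.dist_eq_one_iff_adj]; exact ht
        · apply le_distToSet ⟨t, by simp [htm]⟩
          intro z' hz'
          have hz'ne : z' ≠ w := by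
            rintro rfl
            exact hm (show m = c z' from (Set.mem_preimage.mp hz' : c z' ∈ ({m} : Set (Fin k))).symm ▸ rfl)
          have := (hconn w z').pos_dist_of_ne (Ne.symm hz'ne)
          omega
      · rw [if_neg hm2]
        have : c ⁻¹' {m} = ∅ := by
          push_neg at hm2
          exact hcon m hm2.1 hm2.2
        rw [this]
        unfold distToSet
        simp
  -- two of x, y, z share a color; they are then unresolved
  have hfin : False := by
    have h3 : ∀ u v : W, u ≠ v → c u = c v → False := by
      intro u v huv hcuv
      obtain ⟨i, hi⟩ := hc.2 u v huv
      rw [hprof u i, hprof v i, hcuv] at hi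
      exact hi rfl
    rcases hcol x with h1 | h1 <;> rcases hcol y with h2 | h2 <;> rcases hcol z with h4 | h4
    · exact h3 x y hxy (h1.trans h2.symm)
    · exact h3 x y hxy (h1.trans h2.symm)
    · exact h3 x z hxz (h1.trans h4.symm)
    · exact h3 y z hyz (h2.trans h4.symm)
    · exact h3 y z hyz (h2.trans h4.symm)
    · exact h3 x z hxz (h1.trans h4.symm)
    · exact h3 x y hxy (h1.trans h2.symm)
    · exact h3 x y hxy (h1.trans h2.symm)
  exact hfin

end Locating

end LocAux

namespace LocAux

open SimpleGraph Walk Set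

section Construct

variable {V : Type*} [Fintype V] (T : SimpleGraph V) [DecidableRel T.Adj]

/-- the set of end-branches -/
def EB : Set V := {v | IsEndBranch T v}

noncomputable instance : Fintype ↥(EB T) := (Set.toFinite _).fintype

/-- all the data associated with one end-palm -/
structure PalmData (v : V) where
  k : ℕ
  c : ↥(endPalm T v) → Fin k
  hc : IsLocatingColoring (T.induce (endPalm T v)) c
  hk : k = locatingChromaticNumber (T.induce (endPalm T v))
  n : V
  hadj : T.Adj v n
  hnp : n ∈ endPalm T v
  m : Fin k
  hm1 : m ≠ c ⟨v, self_mem_endPalm⟩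
  hm2 : m ≠ c ⟨n, hnp⟩
  hm3 : (c ⁻¹' {m}).Nonempty

variable {T}

/-- the color of the branch vertex -/
def PalmData.cv {v : V} (d : PalmData T v) : Fin d.k := d.c ⟨v, self_mem_endPalm⟩

/-- the color of the chosen palm-neighbor of the branch vertex -/
def PalmData.cn {v : V} (d : PalmData T v) : Fin d.k := d.c ⟨d.n, d.hnp⟩

lemma PalmData.cv_ne_cn {v : V} (d : PalmData T v) : d.cv ≠ d.cn := by
  apply d.hc.1
  exact induce_adj'.mpr d.hadj

lemma palmData_exists (hT : T.IsTree) {v : V} (hv : IsEndBranch T v) :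
    Nonempty (PalmData T v) := by
  classical
  have hconn := induce_endPalm_connected hT (v := v)
  have hne : {k : ℕ | ∃ c : ↥(endPalm T v) → Fin k,
      IsLocatingColoring (T.induce (endPalm T v)) c}.Nonempty :=
    ⟨_, exists_locating_coloring hconn⟩
  have hmem := Nat.sInf_mem hne
  obtain ⟨c, hc⟩ := hmem
  obtain ⟨u₁, u₂, p₁, p₂, h12, hp₁, hp₂⟩ := hv
  obtain ⟨n, hadj, hns, -⟩ := second_vertex p₁.reverse (Ne.symm (endpath_ne hp₁))
  rw [Walk.support_reverse, List.mem_reverse] at hns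
  have hnp : n ∈ endPalm T v := support_subset_endPalm hp₁ n hns
  have hu₁ : u₁ ∈ endPalm T v := support_subset_endPalm hp₁ u₁ p₁.start_mem_support
  have hu₂ : u₂ ∈ endPalm T v := support_subset_endPalm hp₂ u₂ p₂.start_mem_support
  have hu₁v : u₁ ≠ v := by
    intro h
    have h1 := hp₁.2.1
    have h3 := hp₁.2.2.1
    rw [h] at h1; omega
  have hu₂v : u₂ ≠ v := by
    intro h
    have h1 := hp₂.2.1
    have h3 := hp₂.2.2.1
    rw [h] at h1; omega
  obtain ⟨m, hm1, hm2, hm3⟩ := exists_third_class hconn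
    (x := (⟨u₁, hu₁⟩ : ↥(endPalm T v))) (y := ⟨u₂, hu₂⟩) (z := ⟨v, self_mem_endPalm⟩)
    (by simpa [Subtype.ext_iff] using h12)
    (by simpa [Subtype.ext_iff] using hu₁v)
    (by simpa [Subtype.ext_iff] using hu₂v)
    hc (c ⟨v, self_mem_endPalm⟩) (c ⟨n, hnp⟩)
  exact ⟨⟨_, c, hc, rfl, n, hadj, hnp, m, hm1, hm2, hm3⟩⟩

variable (T)
variable (D : ∀ i : ↥(EB T), PalmData T i.val) (r : V)

/-- private colors of a palm -/
abbrev Priv (i : ↥(EB T)) : Type _ := {x : Fin (D i).k // x ≠ (D i).cv ∧ x ≠ (D i).cn}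

/-- the global palette -/
abbrev Palette : Type _ := Fin 2 ⊕ (Σ i : ↥(EB T), Priv T D i)

/-- parity of a vertex with respect to the root `r` -/
noncomputable def par (x : V) : Fin 2 := ⟨T.dist x r % 2, Nat.mod_lt _ (by omega)⟩

def opp (t : Fin 2) : Fin 2 := ⟨(t.val + 1) % 2, Nat.mod_lt _ (by omega)⟩

lemma opp_ne (t : Fin 2) : opp t ≠ t := by
  fin_cases t <;> decide

/-- the embedding of the palm colors into the global palette -/
noncomputable def iota (i : ↥(EB T)) (m : Fin (D i).k) : Palette T D :=
  if h1 : m = (D i).cv then Sum.inl (par T r i.val)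
  else if h2 : m = (D i).cn then Sum.inl (opp (par T r i.val))
  else Sum.inr ⟨i, ⟨m, h1, h2⟩⟩

lemma iota_inj (i : ↥(EB T)) {m m' : Fin (D i).k}
    (h : iota T D r i m = iota T D r i m') : m = m' := by
  unfold iota at h
  by_cases h1 : m = (D i).cv
  · by_cases h1' : m' = (D i).cv
    · rw [h1, h1']
    · exfalso
      rw [dif_pos h1] at h
      by_cases h2' : m' = (D i).cn
      · rw [dif_neg h1', dif_pos h2'] at h
        exact opp_ne _ (Sum.inl.inj h).symm
      · rw [dif_neg h1', dif_neg h2'] at h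
        cases h
  · by_cases h2 : m = (D i).cn
    · rw [dif_neg h1, dif_pos h2] at h
      by_cases h1' : m' = (D i).cv
      · rw [dif_pos h1'] at h
        exact absurd (Sum.inl.inj h) (fun hh => opp_ne _ hh)
      · by_cases h2' : m' = (D i).cn
        · rw [h2, h2']
        · rw [dif_neg h1', dif_neg h2'] at h
          cases h
    · rw [dif_neg h1, dif_neg h2] at h
      by_cases h1' : m' = (D i).cv
      · rw [dif_pos h1'] at h
        cases h
      · by_cases h2' : m' = (D i).cn
        · rw [dif_neg h1', dif_pos h2'] at h
          cases h
        · rw [dif_neg h1', dif_neg h2'] at h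
          have h3 := Sum.inr.inj h
          have h4 := (Sigma.mk.inj_iff.mp h3).2
          have h5 : (⟨m, h1, h2⟩ : Priv T D i) = ⟨m', h1', h2'⟩ := eq_of_heq h4
          exact congrArg Subtype.val h5

open Classical in
/-- coloring of the whole tree -/
noncomputable def F (x : V) : Palette T D :=
  if h : ∃ i : ↥(EB T), x ∈ endPalm T i.val then
    iota T D r h.choose ((D h.choose).c ⟨x, h.choose_spec⟩)
  else Sum.inl (par T r x)

end Construct

end LocAux

namespace LocAux

open SimpleGraph Walk Set

section FLemmas

variable {V : Type*} [Fintype V] (T : SimpleGraph V) [DecidableRel T.Adj]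
variable (D : ∀ i : ↥(EB T), PalmData T i.val) (r : V)

lemma iota_cv (i : ↥(EB T)) : iota T D r i (D i).cv = Sum.inl (par T r i.val) := by
  unfold iota; rw [dif_pos rfl]

lemma iota_cn (i : ↥(EB T)) : iota T D r i (D i).cn = Sum.inl (opp (par T r i.val)) := by
  unfold iota; rw [dif_neg (Ne.symm (D i).cv_ne_cn), dif_pos rfl]

lemma iota_priv (i : ↥(EB T)) {m : Fin (D i).k} (h1 : m ≠ (D i).cv) (h2 : m ≠ (D i).cn) :
    iota T D r i m = Sum.inr ⟨i, ⟨m, h1, h2⟩⟩ := by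
  unfold iota; rw [dif_neg h1, dif_neg h2]

lemma iota_fst {i : ↥(EB T)} {m : Fin (D i).k} {s : Σ j : ↥(EB T), Priv T D j}
    (h : iota T D r i m = Sum.inr s) : s.1 = i := by
  unfold iota at h
  by_cases h1 : m = (D i).cv
  · rw [dif_pos h1] at h; exact absurd h (by simp)
  · by_cases h2 : m = (D i).cn
    · rw [dif_neg h1, dif_pos h2] at h; exact absurd h (by simp)
    · rw [dif_neg h1, dif_neg h2] at h
      exact congrArg Sigma.fst (Sum.inr.inj h).symm

variable {T D r}

lemma F_palm (hT : T.IsTree) {x : V} (i : ↥(EB T)) (hx : x ∈ endPalm T i.val) :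
    F T D r x = iota T D r i ((D i).c ⟨x, hx⟩) := by
  have hex : ∃ j : ↥(EB T), x ∈ endPalm T j.val := ⟨i, hx⟩
  rw [F, dif_pos hex]
  have hch : hex.choose = i :=
    Subtype.ext (endPalm_disjoint hT hex.choose.2 i.2 hex.choose_spec hx)
  subst hch
  rfl

lemma F_trunk {x : V} (hx : ¬∃ i : ↥(EB T), x ∈ endPalm T i.val) :
    F T D r x = Sum.inl (par T r x) := by
  rw [F, dif_neg hx]

lemma par_ne_of_adj (hT : T.IsTree) {x y : V} (h : T.Adj x y) :
    par T r x ≠ par T r y := by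
  intro hpar
  unfold par at hpar
  rw [Fin.mk.injEq] at hpar
  rcases adj_dist_cases hT h r with h' | h' <;>
    rw [dist_comm' T r x, dist_comm' T r y] at h' <;> omega

/-- the bridge between palm-level and tree-level distances to sets. -/
lemma bridge (hT : T.IsTree) (i : ↥(EB T)) {u : V} (hu : u ∈ endPalm T i.val)
    (S' : Set ↥(endPalm T i.val)) :
    distToSet T u (Subtype.val '' S') =
      distToSet (T.induce (endPalm T i.val)) ⟨u, hu⟩ S' := by
  unfold distToSet
  rw [Set.image_image]
  congr 1
  apply Set.image_congr
  intro z hz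
  have := induce_endPalm_dist hT hu z.2
  simp only [Subtype.coe_eta] at this
  exact this.symm

/-- description of the class of a private color -/
lemma priv_class_eq (hT : T.IsTree) (i : ↥(EB T)) {m : Fin (D i).k}
    (h1 : m ≠ (D i).cv) (h2 : m ≠ (D i).cn) :
    F T D r ⁻¹' {iota T D r i m} = Subtype.val '' ((D i).c ⁻¹' {m}) := by
  ext x
  simp only [Set.mem_preimage, Set.mem_singleton_iff]
  constructor
  · intro hx
    by_cases hpalm : ∃ j : ↥(EB T), x ∈ endPalm T j.val
    · obtain ⟨j, hj⟩ := hpalm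
      rw [F_palm hT j hj] at hx
      by_cases hij : j = i
      · subst hij
        have := iota_inj T D r j hx
        exact ⟨⟨x, hj⟩, this, rfl⟩
      · exfalso
        rw [iota_priv T D r i h1 h2] at hx
        have := iota_fst T D r hx
        simp at this
        exact hij this.symm
    · rw [F_trunk hpalm, iota_priv T D r i h1 h2] at hx
      cases hx
  · rintro ⟨⟨z, hz⟩, hzm, rfl⟩
    rw [F_palm hT i hz]
    simp only [Set.mem_preimage, Set.mem_singleton_iff] at hzm
    rw [hzm]

/-- the class of a palm color, seen from inside the palm: the transfer lemma. -/
lemma transfer (hT : T.IsTree) (i : ↥(EB T)) {u : V} (hu : u ∈ endPalm T i.val)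
    (m : Fin (D i).k) :
    distToSet T u (F T D r ⁻¹' {iota T D r i m}) =
      distToSet (T.induce (endPalm T i.val)) ⟨u, hu⟩ ((D i).c ⁻¹' {m}) := by
  classical
  by_cases h1 : m = (D i).cv
  case neg =>
    by_cases h2 : m = (D i).cn
    case neg =>
      rw [priv_class_eq hT i h1 h2, bridge hT i hu]
    case pos =>
      -- m = cn : the class contains the palm-neighbor n of the branch vertex
      subst h2
      rw [← bridge hT i hu]
      set A := Subtype.val '' ((D i).c ⁻¹' {(D i).cn}) with hA
      have hsplit : F T D r ⁻¹' {iota T D r i (D i).cn} =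
          A ∪ ((F T D r ⁻¹' {iota T D r i (D i).cn}) ∩ {x | x ∉ endPalm T i.val}) := by
        ext x
        simp only [Set.mem_preimage, Set.mem_singleton_iff, Set.mem_union, Set.mem_inter_iff,
          Set.mem_setOf_eq, hA]
        constructor
        · intro hx
          by_cases hxp : x ∈ endPalm T i.val
          · left
            rw [F_palm hT i hxp] at hx
            exact ⟨⟨x, hxp⟩, iota_inj T D r i hx, rfl⟩
          · right; exact ⟨hx, hxp⟩
        · rintro (⟨⟨z, hz⟩, hzm, rfl⟩ | ⟨hx, -⟩)
          · rw [F_palm hT i hz]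
            simp only [Set.mem_preimage, Set.mem_singleton_iff] at hzm
            rw [hzm]
          · exact hx
      rw [hsplit]
      have hnA : (D i).n ∈ A := ⟨⟨(D i).n, (D i).hnp⟩, rfl, rfl⟩
      apply distToSet_union_left ⟨_, hnA⟩
      intro z hz
      obtain ⟨-, hzout⟩ := hz
      calc distToSet T u A ≤ T.dist u (D i).n := distToSet_le hnA
        _ ≤ T.dist u i.val + T.dist i.val (D i).n := hT.isConnected.dist_triangle
        _ ≤ T.dist u i.val + T.dist i.val z := by
            have h1' : T.dist i.val (D i).n = 1 := by
              rw [SimpleGraph.dist_eq_one_iff_adj]; exact (D i).hadj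
            have h2' : 0 < T.dist i.val z := hT.isConnected.pos_dist_of_ne
              (by rintro rfl; exact hzout self_mem_endPalm)
            omega
        _ = T.dist u z := (endPalm_sep hT hu hzout).symm
  case pos =>
    -- m = cv : the class contains the branch vertex itself
    subst h1
    rw [← bridge hT i hu]
    set A := Subtype.val '' ((D i).c ⁻¹' {(D i).cv}) with hA
    have hsplit : F T D r ⁻¹' {iota T D r i (D i).cv} =
        A ∪ ((F T D r ⁻¹' {iota T D r i (D i).cv}) ∩ {x | x ∉ endPalm T i.val}) := by
      ext x
      simp only [Set.mem_preimage, Set.mem_singleton_iff, Set.mem_union, Set.mem_inter_iff,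
        Set.mem_setOf_eq, hA]
      constructor
      · intro hx
        by_cases hxp : x ∈ endPalm T i.val
        · left
          rw [F_palm hT i hxp] at hx
          exact ⟨⟨x, hxp⟩, iota_inj T D r i hx, rfl⟩
        · right; exact ⟨hx, hxp⟩
      · rintro (⟨⟨z, hz⟩, hzm, rfl⟩ | ⟨hx, -⟩)
        · rw [F_palm hT i hz]
          simp only [Set.mem_preimage, Set.mem_singleton_iff] at hzm
          rw [hzm]
        · exact hx
    rw [hsplit]
    have hvA : i.val ∈ A := ⟨⟨i.val, self_mem_endPalm⟩, rfl, rfl⟩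
    apply distToSet_union_left ⟨_, hvA⟩
    intro z hz
    obtain ⟨-, hzout⟩ := hz
    calc distToSet T u A ≤ T.dist u i.val := distToSet_le hvA
      _ ≤ T.dist u i.val + T.dist i.val z := Nat.le_add_right _ _
      _ = T.dist u z := (endPalm_sep hT hu hzout).symm

end FLemmas

end LocAux

namespace LocAux

open SimpleGraph Walk Set

section Outside

variable {V : Type*} [Fintype V] {T : SimpleGraph V} [DecidableRel T.Adj]
variable {D : ∀ i : ↥(EB T), PalmData T i.val} {r : V}

/-- distance from the branch vertex to the chosen private class of its palm -/
noncomputable def Ai (D : ∀ i : ↥(EB T), PalmData T i.val) (i : ↥(EB T)) : ℕ :=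
  distToSet T i.val (Subtype.val '' ((D i).c ⁻¹' {(D i).m}))

lemma priv_nonempty (i : ↥(EB T)) :
    (Subtype.val '' ((D i).c ⁻¹' {(D i).m})).Nonempty := (D i).hm3.image _

lemma outside_val (hT : T.IsTree) (i : ↥(EB T)) {u : V} (hu : u ∉ endPalm T i.val) :
    distToSet T u (F T D r ⁻¹' {iota T D r i (D i).m}) = T.dist u i.val + Ai D i := by
  rw [priv_class_eq hT i (D i).hm1 (D i).hm2]
  apply distToSet_offset (priv_nonempty i)
  rintro z ⟨w, -, rfl⟩
  have h1 := endPalm_sep hT w.2 hu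
  rw [dist_comm' T (w : V) u, dist_comm' T (w : V) i.val, dist_comm' T i.val u] at h1
  omega

lemma inside_le (hT : T.IsTree) (i : ↥(EB T)) {u : V} (hu : u ∈ endPalm T i.val) :
    distToSet T u (F T D r ⁻¹' {iota T D r i (D i).m}) ≤ T.dist u i.val + Ai D i := by
  rw [priv_class_eq hT i (D i).hm1 (D i).hm2]
  obtain ⟨z, hz, hzd⟩ := exists_eq_distToSet (G := T) (u := i.val) (priv_nonempty (D := D) i)
  calc distToSet T u (Subtype.val '' ((D i).c ⁻¹' {(D i).m})) ≤ T.dist u z := distToSet_le hz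
    _ ≤ T.dist u i.val + T.dist i.val z := hT.isConnected.dist_triangle
    _ = T.dist u i.val + Ai D i := by rw [hzd]; rfl

/-- properness of the global coloring -/
lemma F_proper (hT : T.IsTree) : ∀ x y : V, T.Adj x y → F T D r x ≠ F T D r y := by
  have key : ∀ x y : V, T.Adj x y → (∃ i : ↥(EB T), x ∈ endPalm T i.val) →
      F T D r x ≠ F T D r y := by
    rintro x y hadj ⟨i, hxi⟩
    by_cases hy : ∃ j : ↥(EB T), y ∈ endPalm T j.val
    · obtain ⟨j, hyj⟩ := hy
      by_cases hij : i = j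
      · subst hij
        rw [F_palm hT i hxi, F_palm hT i hyj]
        intro h
        have := iota_inj T D r i h
        exact (D i).hc.1 ⟨x, hxi⟩ ⟨y, hyj⟩ (induce_adj'.mpr hadj) this
      · -- different palms : x and y must be the branch vertices
        have hyni : y ∉ endPalm T i.val := by
          intro hmem
          exact hij (Subtype.ext (endPalm_disjoint hT i.2 j.2 hmem hyj))
        have hxnj : x ∉ endPalm T j.val := by
          intro hmem
          exact hij (Subtype.ext (endPalm_disjoint hT i.2 j.2 hxi hmem))
        have hxv : x = i.val := by
          by_contra hne
          exact hyni (endPalm_closure hT hxi hne hadj)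
        have hyv : y = j.val := by
          by_contra hne
          exact hxnj (endPalm_closure hT hyj hne hadj.symm)
        subst hxv; subst hyv
        rw [F_palm hT i hxi, F_palm hT j hyj]
        have hxi' : ((D i).c ⟨i.val, hxi⟩) = (D i).cv := rfl
        have hyj' : ((D j).c ⟨j.val, hyj⟩) = (D j).cv := rfl
        rw [hxi', hyj', iota_cv, iota_cv]
        intro h
        exact par_ne_of_adj hT hadj (Sum.inl.inj h)
    · -- y is a trunk vertex, so x must be the branch vertex
      have hxv : x = i.val := by
        by_contra hne
        exact hy ⟨i, endPalm_closure hT hxi hne hadj⟩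
      subst hxv
      rw [F_palm hT i hxi, F_trunk hy]
      have hxi' : ((D i).c ⟨i.val, hxi⟩) = (D i).cv := rfl
      rw [hxi', iota_cv]
      intro h
      exact par_ne_of_adj hT hadj (Sum.inl.inj h)
  intro x y hadj
  by_cases hx : ∃ i : ↥(EB T), x ∈ endPalm T i.val
  · exact key x y hadj hx
  · by_cases hy : ∃ j : ↥(EB T), y ∈ endPalm T j.val
    · exact (key y x hadj.symm hy).symm
    · rw [F_trunk hx, F_trunk hy]
      intro h
      exact par_ne_of_adj hT hadj (Sum.inl.inj h)

end Outside

end LocAux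

namespace LocAux

open SimpleGraph Walk Set

section Trunk

variable {V : Type*} [Fintype V] {T : SimpleGraph V} [DecidableRel T.Adj]

/-- two points of a path at the same distance from its endpoint coincide -/
lemma path_point_unique (hT : T.IsTree) {ℓ w u u' : V} {p : T.Walk ℓ w} (hp : p.IsPath)
    (hu : u ∈ p.support) (hu' : u' ∈ p.support) (heq : T.dist u w = T.dist u' w) :
    u = u' := by
  classical
  have hspec := p.take_spec hu
  have hmem : u' ∈ ((p.takeUntil u hu).append (p.dropUntil u hu)).support := by
    rw [hspec]; exact hu'
  rw [Walk.mem_support_append_iff] at hmem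
  have e1 := dist_add_of_mem_support hT hp hu
  have e2 := dist_add_of_mem_support hT hp hu'
  rcases hmem with hm | hm
  · have e3 := dist_add_of_mem_support hT (hp.takeUntil hu) hm
    have : T.dist u' u = 0 := by omega
    exact ((hT.isConnected u' u).dist_eq_zero_iff.mp this).symm
  · have e3 := dist_add_of_mem_support hT (hp.dropUntil hu) hm
    have : T.dist u u' = 0 := by omega
    exact (hT.isConnected u u').dist_eq_zero_iff.mp this

/-- an end-branch cannot lie on an end-path except at the branch endpoint -/
lemma endbranch_not_mem_endpath {ℓ w x : V} {p : T.Walk ℓ w} (hp : IsEndPath T p)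
    (hwnb : ¬IsEndBranch T w) (hx : IsEndBranch T x) : x ∉ p.support := by
  intro hmem
  rcases endpath_support_deg hp hmem with h | h
  · subst h; exact hwnb hx
  · have := endbranch_deg hx; omega

/-- a trunk vertex whose direction towards `y` sees no end-branch on its own side
lies on a pendant end-path -/
lemma trunk_pendant (hT : T.IsTree) (hb : ∃ v₀, IsEndBranch T v₀) {u y : V}
    (hadj : T.Adj u y) (hnb : ∀ x, IsEndBranch T x → x ∉ Side T u y)
    (hu : ¬∃ i : ↥(EB T), u ∈ endPalm T i.val) :
    ∃ (ℓ w : V) (p : T.Walk ℓ w), IsEndPath T p ∧ u ∈ p.support ∧ u ≠ w ∧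
      ¬IsEndBranch T w ∧ (∀ x, x ∉ p.support → T.dist u x = T.dist u w + T.dist w x) := by
  obtain ⟨ℓ, w, p, hp, hus, hwout⟩ := claimB hT hadj hnb hb
  have hwnb : ¬IsEndBranch T w := by
    intro hwe
    exact hu ⟨⟨w, hwe⟩, support_subset_endPalm hp u hus⟩
  have huw : u ≠ w := by
    rintro rfl
    exact hwout (side_start hT hadj)
  exact ⟨ℓ, w, p, hp, hus, huw, hwnb,
    fun x hx => endpath_sep hT hp hus hx⟩

/-- from the branch endpoint of a pendant end-path at a non-end-branch, in any direction
avoiding a given target there is an end-branch behind it -/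
lemma choose_far_branch (hT : T.IsTree) {ℓ w : V} {p : T.Walk ℓ w} (hp : IsEndPath T p)
    (hwnb : ¬IsEndBranch T w) (τ : V) :
    ∃ x : V, IsEndBranch T x ∧ x ∉ p.support ∧
      T.dist τ x = T.dist τ w + T.dist w x := by
  classical
  obtain ⟨z₁, z₂, hz12, h₁, h₂, ho₁, ho₂⟩ := exists_two_neighbors_off_path hT hp.1 hp.2.2.1
  -- each side contains an end-branch
  have hside : ∀ z, T.Adj z w → z ∉ p.support → ∃ x, IsEndBranch T x ∧ x ∈ Side T z w := by
    intro z hzadj hzout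
    by_contra hcon
    push_neg at hcon
    have hnb' : ∀ x, IsEndBranch T x → x ∉ Side T z w := fun x hx hmem => hcon x hx hmem
    obtain ⟨ℓ', P', hP', hℓ's⟩ := endpath_of_chain_side hT hzadj
      (no_branch_in_side hT hzadj hnb') hp.2.2.1
    have hll : ℓ ≠ ℓ' := by
      rintro rfl
      have : P' = p := path_unique hT hP'.1 hp.1
      subst this
      -- then the path from ℓ to w crosses the side of z, so z lies on it
      have hwside : w ∉ Side T z w := by
        intro hmem
        exact side_disjoint hT hzadj hmem (side_start hT hzadj.symm)
      have := (side_walk_mem hT hzadj hℓ's hwside P').1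
      exact hzout this
    exact hwnb ⟨ℓ, ℓ', p, P', hll, hp, hP'⟩
  obtain ⟨x₁, hx₁, hx₁s⟩ := hside z₁ h₁ ho₁
  obtain ⟨x₂, hx₂, hx₂s⟩ := hside z₂ h₂ ho₂
  -- the two sides are disjoint
  have hdisj : ∀ x, x ∈ Side T z₁ w → x ∈ Side T z₂ w → False := by
    intro x hm₁ hm₂
    rw [mem_side_iff hT h₁] at hm₁
    rw [mem_side_iff hT h₂] at hm₂
    exact hz12 (toward_unique hT h₁ h₂ (x := x) hm₁ hm₂)
  -- τ avoids one of the two sides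
  have hpick : ∃ z x, T.Adj z w ∧ IsEndBranch T x ∧ x ∈ Side T z w ∧ τ ∉ Side T z w := by
    by_cases hτ : τ ∈ Side T z₁ w
    · exact ⟨z₂, x₂, h₂, hx₂, hx₂s, fun hmem => hdisj τ hτ hmem⟩
    · exact ⟨z₁, x₁, h₁, hx₁, hx₁s, hτ⟩
  obtain ⟨z, x, hzadj, hx, hxs, hτout⟩ := hpick
  refine ⟨x, hx, endbranch_not_mem_endpath hp hwnb hx, ?_⟩
  have hτside : τ ∈ Side T w z := (not_side_iff hT hzadj).mp hτout
  exact (dist_add_crossing hT hzadj.symm hτside hxs).1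

end Trunk

end LocAux

namespace LocAux

open SimpleGraph Walk Set

section Locating2

variable {V : Type*} [Fintype V] {T : SimpleGraph V} [DecidableRel T.Adj]
variable {D : ∀ i : ↥(EB T), PalmData T i.val} {r : V}

/-- resolution of a palm vertex against a trunk vertex -/
lemma palm_trunk_resolve (hT : T.IsTree) (hb : ∃ v₀, IsEndBranch T v₀)
    (i : ↥(EB T)) {u u' : V} (hu : u ∈ endPalm T i.val)
    (hu' : ¬∃ j : ↥(EB T), u' ∈ endPalm T j.val) :
    ∃ γ : Palette T D,
      distToSet T u (F T D r ⁻¹' {γ}) ≠ distToSet T u' (F T D r ⁻¹' {γ}) := by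
  classical
  by_contra hall
  push_neg at hall
  set s := T.dist u i.val with hs
  -- u' is outside every palm
  have hout : ∀ j : ↥(EB T), u' ∉ endPalm T j.val := fun j hj => hu' ⟨j, hj⟩
  -- the class of palm i gives dist u' v_i ≤ s
  have h1 : T.dist u' i.val ≤ s := by
    have := hall (iota T D r i (D i).m)
    rw [outside_val hT i (hout i)] at this
    have h2 := inside_le (D := D) (r := r) hT i hu
    omega
  -- distances from u to other palms
  have hEj : ∀ j : ↥(EB T), j ≠ i → T.dist u' j.val = s + T.dist i.val j.val := by
    intro j hji
    
    have hvj : (j : V) ∉ endPalm T i.val := by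
      intro hmem
      exact hji (Subtype.ext (endPalm_disjoint hT j.2 i.2 self_mem_endPalm hmem))
    have e1 : T.dist u j.val = s + T.dist i.val j.val := endPalm_sep hT hu hvj
    have := hall (iota T D r j (D j).m)
    rw [outside_val hT j (hout j)] at this
    have e2 : distToSet T u (F T D r ⁻¹' {iota T D r j (D j).m}) =
        T.dist u j.val + Ai D j := by
      apply outside_val hT j
      intro hmem
      exact hji (Subtype.ext (endPalm_disjoint hT i.2 j.2 hu hmem)).symm
    rw [e2] at this
    omega
  -- u' ≠ v_i
  have hne : u' ≠ i.val := by
    intro h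
    exact hout i (h ▸ self_mem_endPalm)
  obtain ⟨y, hyadj, hyd⟩ := exists_toward hT hne
  by_cases hcase : ∃ j : ↥(EB T), (j : V) ∈ Side T u' y
  · -- an end-branch lies behind u' : direct contradiction
    obtain ⟨j, hj⟩ := hcase
    have hvi_side : (i : V) ∈ Side T y u' := by
      simp only [Side, Set.mem_setOf_eq]
      rw [dist_comm' T i.val y, dist_comm' T i.val u']
      omega
    have hji : j ≠ i := by
      rintro rfl
      exact side_disjoint hT hyadj hj hvi_side
    have hcross := (dist_add_crossing hT hyadj hj hvi_side).1
    -- dist v_j v_i = dist v_j u' + dist u' v_i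
    have he := hEj j hji
    rw [dist_comm' T j.val u', dist_comm' T j.val i.val] at hcross
    have : T.dist u' i.val = 0 := by omega
    exact hne ((hT.isConnected u' i.val).dist_eq_zero_iff.mp this)
  · -- u' lies on a pendant end-path
    push_neg at hcase
    obtain ⟨ℓ, w, p, hp, hus, huw, hwnb, hsep⟩ :=
      trunk_pendant hT hb hyadj (fun x hx hmem => hcase ⟨x, hx⟩ hmem) hu'
    set t := T.dist u' w with ht
    have hvi_out : (i : V) ∉ p.support := endbranch_not_mem_endpath hp hwnb i.2
    have hri : T.dist u' i.val = t + T.dist w i.val := hsep i.val hvi_out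
    obtain ⟨x, hxe, hxout, hxd⟩ := choose_far_branch hT hp hwnb i.val
    have hji : (⟨x, hxe⟩ : ↥(EB T)) ≠ i := by
      intro hji
      have hxi : x = i.val := congrArg Subtype.val hji
      rw [hxi] at hxd
      have h0 : T.dist (i.val : V) i.val = 0 := SimpleGraph.dist_self
      have hw0 : T.dist w (i.val : V) = 0 := by omega
      have hwv : w = i.val := (hT.isConnected w i.val).dist_eq_zero_iff.mp hw0
      exact hwnb (by rw [hwv]; exact i.2)
    have he : T.dist u' x = s + T.dist i.val x := hEj ⟨x, hxe⟩ hji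
    have hd1 : T.dist u' x = t + T.dist w x := hsep x hxout
    -- he : dist u' x = s + dist v_i x ; hxd : dist v_i x = dist v_i w + dist w x
    have ht' : t = s + T.dist i.val w := by
      rw [hd1, hxd] at he
      omega
    rw [dist_comm' T w i.val] at hri
    have hviw : T.dist i.val w = 0 := by omega
    have hiw : (i.val : V) = w := (hT.isConnected i.val w).dist_eq_zero_iff.mp hviw
    exact hwnb (by rw [← hiw]; exact i.2)

/-- the global coloring is locating -/
lemma F_locating (hT : T.IsTree) (hb : ∃ v₀, IsEndBranch T v₀) :
    ∀ u u' : V, u ≠ u' → ∃ γ : Palette T D,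
      distToSet T u (F T D r ⁻¹' {γ}) ≠ distToSet T u' (F T D r ⁻¹' {γ}) := by
  classical
  intro u u' huu
  by_cases hu : ∃ i : ↥(EB T), u ∈ endPalm T i.val
  · obtain ⟨i, hui⟩ := hu
    by_cases hu' : ∃ j : ↥(EB T), u' ∈ endPalm T j.val
    · obtain ⟨j, hu'j⟩ := hu'
      by_cases hij : i = j
      · -- same palm : use the palm's locating coloring
        subst hij
        obtain ⟨m, hm⟩ := (D i).hc.2 ⟨u, hui⟩ ⟨u', hu'j⟩ (by simpa [Subtype.ext_iff] using huu)
        refine ⟨iota T D r i m, ?_⟩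
        rw [transfer hT i hui m, transfer hT i hu'j m]
        exact hm
      · -- different palms
        by_contra hall
        push_neg at hall
        have hvij : (i : V) ≠ j.val := fun h => hij (Subtype.ext h)
        have huo : u ∉ endPalm T j.val := fun hmem =>
          hij (Subtype.ext (endPalm_disjoint hT i.2 j.2 hui hmem))
        have hu'o : u' ∉ endPalm T i.val := fun hmem =>
          hij (Subtype.ext (endPalm_disjoint hT i.2 j.2 hmem hu'j))
        have hvji : (j : V) ∉ endPalm T i.val := fun hmem =>
          hij (Subtype.ext (endPalm_disjoint hT i.2 j.2 hmem self_mem_endPalm))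
        have hvij' : (i : V) ∉ endPalm T j.val := fun hmem =>
          hij (Subtype.ext (endPalm_disjoint hT i.2 j.2 self_mem_endPalm hmem))
        have e1 := hall (iota T D r i (D i).m)
        rw [outside_val hT i hu'o] at e1
        have e1' := inside_le (D := D) (r := r) hT i hui
        have e2 := hall (iota T D r j (D j).m)
        rw [outside_val hT j huo] at e2
        have e2' := inside_le (D := D) (r := r) hT j hu'j
        have f1 : T.dist u' i.val = T.dist u' j.val + T.dist j.val i.val :=
          endPalm_sep hT hu'j hvij'
        have f2 : T.dist u j.val = T.dist u i.val + T.dist i.val j.val :=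
          endPalm_sep hT hui hvji
        have hD : 0 < T.dist i.val j.val := hT.isConnected.pos_dist_of_ne hvij
        rw [dist_comm' T j.val i.val] at f1
        omega
    · exact palm_trunk_resolve hT hb i hui hu'
  · by_cases hu' : ∃ j : ↥(EB T), u' ∈ endPalm T j.val
    · obtain ⟨j, hu'j⟩ := hu'
      obtain ⟨γ, hγ⟩ := palm_trunk_resolve (D := D) (r := r) hT hb j hu'j hu
      exact ⟨γ, hγ.symm⟩
    · -- both are trunk vertices
      by_contra hall
      push_neg at hall
      have hout : ∀ j : ↥(EB T), u ∉ endPalm T j.val := fun j hj => hu ⟨j, hj⟩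
      have hout' : ∀ j : ↥(EB T), u' ∉ endPalm T j.val := fun j hj => hu' ⟨j, hj⟩
      have hE : ∀ j : ↥(EB T), T.dist u j.val = T.dist u' j.val := by
        intro j
        have := hall (iota T D r j (D j).m)
        rw [outside_val hT j (hout j), outside_val hT j (hout' j)] at this
        omega
      -- find the pendant structure for u towards u'
      obtain ⟨y, hyadj, hyd⟩ := exists_toward hT huu
      have hcase : ∀ x, IsEndBranch T x → x ∉ Side T u y := by
        intro x hx hmem
        have hu'side : u' ∈ Side T y u := by
          simp only [Side, Set.mem_setOf_eq]
          rw [dist_comm' T u' y, dist_comm' T u' u]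
          omega
        have hcross := (dist_add_crossing hT hyadj hmem hu'side).1
        -- dist x u' = dist x u + dist u u'
        have he : T.dist u x = T.dist u' x := hE ⟨x, hx⟩
        rw [dist_comm' T x u, dist_comm' T x u'] at hcross
        have : T.dist u u' = 0 := by omega
        exact huu ((hT.isConnected u u').dist_eq_zero_iff.mp this)
      obtain ⟨ℓ, w, p, hp, hus, huw, hwnb, hsep⟩ := trunk_pendant hT hb hyadj hcase hu
      -- and for u' towards u
      obtain ⟨y', hy'adj, hy'd⟩ := exists_toward hT (Ne.symm huu)
      have hcase' : ∀ x, IsEndBranch T x → x ∉ Side T u' y' := by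
        intro x hx hmem
        have huside : u ∈ Side T y' u' := by
          simp only [Side, Set.mem_setOf_eq]
          rw [dist_comm' T u y', dist_comm' T u u']
          omega
        have hcross := (dist_add_crossing hT hy'adj hmem huside).1
        have he : T.dist u x = T.dist u' x := hE ⟨x, hx⟩
        rw [dist_comm' T x u', dist_comm' T x u] at hcross
        have : T.dist u' u = 0 := by omega
        exact huu (((hT.isConnected u' u).dist_eq_zero_iff.mp this)).symm
      obtain ⟨ℓ', w', p', hp', hus', huw', hwnb', hsep'⟩ := trunk_pendant hT hb hy'adj hcase' hu'
      by_cases hww : w = w'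
      · -- same pendant path
        subst hww
        have hll : ℓ = ℓ' := by
          by_contra hll
          exact hwnb ⟨ℓ, ℓ', p, p', hll, hp, hp'⟩
        subst hll
        have hpp : p = p' := path_unique hT hp.1 hp'.1
        subst hpp
        obtain ⟨v₀, hv₀⟩ := hb
        have hv₀out : v₀ ∉ p.support := endbranch_not_mem_endpath hp hwnb hv₀
        have d1 := hsep v₀ hv₀out
        have d2 := hsep' v₀ hv₀out
        have he : T.dist u v₀ = T.dist u' v₀ := hE ⟨v₀, hv₀⟩
        have ht : T.dist u w = T.dist u' w := by omega
        exact huu (path_point_unique hT hp.1 hus hus' ht)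
      · -- different pendant paths : both directions give contradicting inequalities
        obtain ⟨x, hxe, hxout, hxd⟩ := choose_far_branch hT hp hwnb w'
        have hx'out : x ∉ p'.support := endbranch_not_mem_endpath hp' hwnb' hxe
        have d1 := hsep x hxout
        have d2 := hsep' x hx'out
        have he : T.dist u x = T.dist u' x := hE ⟨x, hxe⟩
        -- dist w' x = dist w' w + dist w x
        have r1 : T.dist u w = T.dist u' w' + T.dist w' w := by omega
        obtain ⟨x', hx'e, hx'out2, hx'd⟩ := choose_far_branch hT hp' hwnb' w
        have hxout2 : x' ∉ p.support := endbranch_not_mem_endpath hp hwnb hx'e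
        have d3 := hsep x' hxout2
        have d4 := hsep' x' hx'out2
        have he' : T.dist u x' = T.dist u' x' := hE ⟨x', hx'e⟩
        have r2 : T.dist u' w' = T.dist u w + T.dist w w' := by omega
        have hpos : 0 < T.dist w w' := hT.isConnected.pos_dist_of_ne hww
        rw [dist_comm' T w' w] at r1
        omega

end Locating2

end LocAux

namespace LocAux

open SimpleGraph Walk Set

section Final

variable {V : Type*} [Fintype V] {T : SimpleGraph V} [DecidableRel T.Adj]
variable (D : ∀ i : ↥(EB T), PalmData T i.val)

lemma k_ge_three (i : ↥(EB T)) : 3 ≤ (D i).k := by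
  classical
  have h1 : (D i).m ≠ (D i).cv := (D i).hm1
  have h2 : (D i).m ≠ (D i).cn := (D i).hm2
  have h3 : (D i).cv ≠ (D i).cn := (D i).cv_ne_cn
  have hc : ({(D i).m, (D i).cv, (D i).cn} : Finset (Fin (D i).k)).card = 3 := by
    rw [Finset.card_insert_of_notMem (by simp [h1, h2]),
      Finset.card_insert_of_notMem (by simp [h3]), Finset.card_singleton]
  calc (3 : ℕ) = _ := hc.symm
    _ ≤ Finset.univ.card := Finset.card_le_card (Finset.subset_univ _)
    _ = (D i).k := by rw [Finset.card_univ, Fintype.card_fin]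

lemma priv_card (i : ↥(EB T)) : Fintype.card (Priv T D i) = (D i).k - 2 := by
  classical
  rw [Fintype.card_subtype]
  have heq : Finset.univ.filter (fun x : Fin (D i).k => x ≠ (D i).cv ∧ x ≠ (D i).cn)
      = Finset.univ \ {(D i).cv, (D i).cn} := by
    ext x
    simp
  rw [heq, Finset.card_sdiff_of_subset (Finset.subset_univ _), Finset.card_univ, Fintype.card_fin]
  have : ({(D i).cv, (D i).cn} : Finset (Fin (D i).k)).card = 2 := by
    rw [Finset.card_insert_of_notMem (by simp [(D i).cv_ne_cn]), Finset.card_singleton]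
  rw [this]

lemma palette_card : Fintype.card (Palette T D) = 2 + ∑ i : ↥(EB T), ((D i).k - 2) := by
  classical
  rw [Fintype.card_sum, Fintype.card_sigma, Fintype.card_fin]
  congr 1
  apply Finset.sum_congr rfl
  intro i _
  exact priv_card D i

lemma chi_le (r : V) (hT : T.IsTree) (hb : ∃ v₀, IsEndBranch T v₀) :
    locatingChromaticNumber T ≤ Fintype.card (Palette T D) := by
  classical
  set e := Fintype.equivFin (Palette T D) with he
  have hmem : Fintype.card (Palette T D) ∈
      {k : ℕ | ∃ c : V → Fin k, IsLocatingColoring T c} := by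
    refine ⟨fun x => e (F T D r x), ?_, ?_⟩
    · intro x y hadj h
      exact F_proper hT x y hadj (e.injective h)
    · intro u u' huu
      obtain ⟨γ, hγ⟩ := F_locating (D := D) (r := r) hT hb u u' huu
      refine ⟨e γ, ?_⟩
      have hpre : (fun x => e (F T D r x)) ⁻¹' {e γ} = F T D r ⁻¹' {γ} := by
        ext x
        simp [Equiv.apply_eq_iff_eq]
      rw [hpre]
      exact hγ
  exact Nat.sInf_le hmem

end Final

end LocAux


open LocAux

/-- If `T` is a tree with at least one end-palm, and `P_1, …, P_b` are its
end-palms (indexed by its end-branches, `b ≥ 1`), then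
`χ_L(T) ≤ 2 - 2b + ∑_{i=1}^b χ_L(P_i)`. -/
theorem locatingChromaticNumber_tree_le {V : Type*} [Fintype V]
    (T : SimpleGraph V) [DecidableRel T.Adj] (hT : T.IsTree)
    (hb : ∃ v, IsEndBranch T v) :
    (locatingChromaticNumber T : ℤ) ≤
      2 - 2 * ({v | IsEndBranch T v}.ncard : ℤ) +
        ∑ᶠ v ∈ {v | IsEndBranch T v},
          (locatingChromaticNumber (T.induce (endPalm T v)) : ℤ) := by
  classical
  obtain ⟨v₀, hv₀⟩ := hb
  have hD : ∀ i : ↥(EB T), Nonempty (PalmData T i.val) := fun i => palmData_exists hT i.2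
  set D : ∀ i : ↥(EB T), PalmData T i.val := fun i => (hD i).some with hDdef
  have hchi := chi_le D v₀ hT ⟨v₀, hv₀⟩
  rw [palette_card] at hchi
  -- pass to ℤ
  have hcast : (locatingChromaticNumber T : ℤ) ≤
      2 + ∑ i : ↥(EB T), (((D i).k : ℤ) - 2) := by
    calc (locatingChromaticNumber T : ℤ) ≤ ((2 + ∑ i : ↥(EB T), ((D i).k - 2) : ℕ) : ℤ) := by
          exact_mod_cast hchi
      _ = 2 + ∑ i : ↥(EB T), (((D i).k : ℤ) - 2) := by
          push_cast
          congr 1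
          apply Finset.sum_congr rfl
          intro i _
          have h3 := k_ge_three D i
          omega
  -- rewrite k i as the locating chromatic number of the palm
  have hk : ∀ i : ↥(EB T), ((D i).k : ℤ) =
      (locatingChromaticNumber (T.induce (endPalm T i.val)) : ℤ) := by
    intro i
    exact_mod_cast (D i).hk
  -- identify sums and cardinalities
  have hsum : ∑ᶠ v ∈ {v | IsEndBranch T v},
      (locatingChromaticNumber (T.induce (endPalm T v)) : ℤ) =
      ∑ i : ↥(EB T), (locatingChromaticNumber (T.induce (endPalm T i.val)) : ℤ) := by
    have h1 : ({v | IsEndBranch T v} : Set V) = ↑((EB T).toFinset) := by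
      rw [Set.coe_toFinset]; rfl
    rw [h1, finsum_mem_coe_finset]
    rw [← Finset.sum_subtype (EB T).toFinset (fun x => Set.mem_toFinset)
      (fun v => (locatingChromaticNumber (T.induce (endPalm T v)) : ℤ))]
  have hcard : ({v | IsEndBranch T v} : Set V).ncard = Fintype.card ↥(EB T) := by
    have : ({v | IsEndBranch T v} : Set V) = EB T := rfl
    rw [this, Set.ncard_eq_toFinset_card', Set.toFinset_card]
  rw [hsum, hcard]
  calc (locatingChromaticNumber T : ℤ) ≤ 2 + ∑ i : ↥(EB T), (((D i).k : ℤ) - 2) := hcast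
    _ = 2 - 2 * (Fintype.card ↥(EB T) : ℤ) +
        ∑ i : ↥(EB T), (locatingChromaticNumber (T.induce (endPalm T i.val)) : ℤ) := by
      rw [Finset.sum_sub_distrib]
      simp only [Finset.sum_const, Finset.card_univ, nsmul_eq_mul, mul_comm]
      rw [Finset.sum_congr rfl (fun i _ => hk i)]
      ring
  -- done
end

section
/- If G is a simple connected graph with locating chromatic number χ_L(G) = k ≥ 3, then the maximum degree of G satisfies Δ(G) ≤ 4·3^{k−3}. -/
open SimpleGraph

section Aux

variable {V : Type*} {G : SimpleGraph V}

lemma distToSet_le_dist_of_mem {u v : V} {S : Set V} (hv : v ∈ S) :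
    distToSet G u S ≤ G.dist u v :=
  Nat.sInf_le ⟨v, hv, rfl⟩

lemma distToSet_eq_zero_of_mem {u : V} {S : Set V} (hu : u ∈ S) :
    distToSet G u S = 0 := by
  have h := distToSet_le_dist_of_mem (G := G) (u := u) hu
  rw [SimpleGraph.dist_self] at h
  omega

lemma distToSet_empty (u : V) : distToSet G u (∅ : Set V) = 0 := by
  simp [distToSet]

lemma mem_of_distToSet_eq_zero (hG : G.Connected) {u : V} {S : Set V}
    (hS : S.Nonempty) (h : distToSet G u S = 0) : u ∈ S := by
  have hne : (G.dist u '' S).Nonempty := hS.image _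
  have h2 : distToSet G u S ∈ G.dist u '' S := Nat.sInf_mem hne
  rw [h] at h2
  have this := h2
  obtain ⟨v, hv, hdist⟩ := this
  rw [(hG.dist_eq_zero_iff).mp hdist]; exact hv

lemma distToSet_ne_zero (hG : G.Connected) {u : V} {S : Set V}
    (hS : S.Nonempty) (h : u ∉ S) : distToSet G u S ≠ 0 :=
  fun h0 => h (mem_of_distToSet_eq_zero hG hS h0)

lemma distToSet_le_of_adj (hG : G.Connected) {u w : V} (h : G.Adj u w) (S : Set V) :
    distToSet G w S ≤ distToSet G u S + 1 := by
  rcases S.eq_empty_or_nonempty with rfl | hS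
  · simp [distToSet_empty]
  · have hne : (G.dist u '' S).Nonempty := hS.image _
    obtain ⟨v, hv, hdist⟩ := Nat.sInf_mem hne
    have h1 : G.dist w u = 1 := SimpleGraph.dist_eq_one_iff_adj.mpr h.symm
    calc distToSet G w S ≤ G.dist w v := distToSet_le_dist_of_mem hv
      _ ≤ G.dist w u + G.dist u v := hG.dist_triangle
      _ = distToSet G u S + 1 := by
          have h2 : G.dist u v = distToSet G u S := hdist
          rw [h1]; omega

lemma arith_key (n : ℕ) : (n + 2) * 2 ^ (n + 1) ≤ 4 * 3 ^ n := by
  induction n with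
  | zero => norm_num
  | succ n ih =>
    have h2 : (n + 3) * 2 ^ (n + 2) = 2 * ((n + 3) * 2 ^ (n + 1)) := by ring
    have h3 : 2 * ((n + 3) * 2 ^ (n + 1)) ≤ 3 * ((n + 2) * 2 ^ (n + 1)) := by
      have : 2 * (n + 3) ≤ 3 * (n + 2) := by omega
      nlinarith [pow_pos (by norm_num : 0 < 2) (n + 1)]
    calc (n + 3) * 2 ^ (n + 2) = 2 * ((n + 3) * 2 ^ (n + 1)) := h2
      _ ≤ 3 * ((n + 2) * 2 ^ (n + 1)) := h3
      _ ≤ 3 * (4 * 3 ^ n) := by exact Nat.mul_le_mul_left 3 ih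
      _ = 4 * 3 ^ (n + 1) := by ring

lemma arith_main (m b k : ℕ) (hk : 3 ≤ k) (h : m + b ≤ k - 1) :
    m * 2 ^ (m - 1) * 3 ^ b ≤ 4 * 3 ^ (k - 3) := by
  match m with
  | 0 => simp
  | 1 =>
    have hb : b ≤ k - 2 := by omega
    have : (3:ℕ) ^ b ≤ 3 ^ (k - 2) := Nat.pow_le_pow_right (by norm_num) hb
    have hk2 : k - 2 = (k - 3) + 1 := by omega
    calc 1 * 2 ^ 0 * 3 ^ b = 3 ^ b := by ring
      _ ≤ 3 ^ (k - 2) := this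
      _ = 3 ^ (k - 3) * 3 := by rw [hk2, pow_succ]
      _ ≤ 4 * 3 ^ (k - 3) := by nlinarith [pow_pos (by norm_num : 0 < 3) (k-3)]
  | (n+2) =>
    have h1 : (n + 2) * 2 ^ (n + 1) ≤ 4 * 3 ^ n := arith_key n
    have h2 : n + b ≤ k - 3 := by omega
    calc (n+2) * 2 ^ (n + 2 - 1) * 3 ^ b ≤ 4 * 3 ^ n * 3 ^ b :=
          Nat.mul_le_mul_right _ h1
      _ = 4 * 3 ^ (n + b) := by rw [pow_add]; ring
      _ ≤ 4 * 3 ^ (k - 3) := by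
          have := Nat.pow_le_pow_right (by norm_num : 1 ≤ 3) h2
          omega

end Aux

/-- If `G` is a simple connected graph with locating chromatic number
`χ_L(G) = k ≥ 3`, then its maximum degree satisfies `Δ(G) ≤ 4 · 3^(k-3)`. -/
theorem maxDegree_le_of_locatingChromaticNumber {V : Type*} [Fintype V]
    (G : SimpleGraph V) [DecidableRel G.Adj] (hG : G.Connected)
    (k : ℕ) (hk : 3 ≤ k) (hχ : locatingChromaticNumber G = k) :
    G.maxDegree ≤ 4 * 3 ^ (k - 3) := by
  classical
  -- Extract a locating k-coloring
  have hne : {n : ℕ | ∃ c : V → Fin n, IsLocatingColoring G c}.Nonempty := by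
    by_contra h
    rw [Set.not_nonempty_iff_eq_empty] at h
    rw [locatingChromaticNumber, h, Nat.sInf_empty] at hχ
    omega
  have hmem := Nat.sInf_mem hne
  rw [show sInf {n : ℕ | ∃ c : V → Fin n, IsLocatingColoring G c}
      = locatingChromaticNumber G from rfl, hχ] at hmem
  obtain ⟨c, hproper, hloc⟩ := hmem
  apply SimpleGraph.maxDegree_le_of_forall_degree_le
  intro u
  set d : Fin k → ℕ := fun i => distToSet G u (c ⁻¹' {i}) with hd
  set code : V → Fin k → ℕ := fun w i => distToSet G w (c ⁻¹' {i}) with hcode_def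
  set A : Finset (Fin k) := Finset.univ.filter (fun i => d i = 1) with hA
  set B : Finset (Fin k) := Finset.univ.filter (fun i => 2 ≤ d i) with hB
  set S : Fin k → Fin k → Finset ℕ := fun j i =>
    if i = c u then {1} else if i = j then {0}
    else if d i = 1 then {1, 2} else if d i = 0 then {0} else Finset.range 3 with hS
  set F : V → Fin k × (Fin k → ℕ) :=
    fun w => (c w, fun i => code w i - (d i - 1)) with hF
  set T : Finset (Fin k × (Fin k → ℕ)) :=
    A.biUnion (fun j => ({j} : Finset (Fin k)) ×ˢ Fintype.piFinset (S j)) with hT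
  -- basic facts
  have hdcu : d (c u) = 0 := distToSet_eq_zero_of_mem rfl
  have hlip1 : ∀ w, G.Adj u w → ∀ i, code w i ≤ d i + 1 :=
    fun w hw i => distToSet_le_of_adj hG hw _
  have hlip2 : ∀ w, G.Adj u w → ∀ i, d i ≤ code w i + 1 :=
    fun w hw i => distToSet_le_of_adj hG hw.symm _
  have hcw1 : ∀ w, G.Adj u w → d (c w) = 1 := by
    intro w hw
    have h1 : d (c w) ≤ G.dist u w := distToSet_le_dist_of_mem rfl
    have h2 : G.dist u w = 1 := SimpleGraph.dist_eq_one_iff_adj.mpr hw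
    have h3 : d (c w) ≠ 0 :=
      distToSet_ne_zero hG ⟨w, rfl⟩ (fun hmem => hproper u w hw hmem)
    omega
  have hcodecw : ∀ w : V, code w (c w) = 0 := fun w => distToSet_eq_zero_of_mem rfl
  have hcodecu : ∀ w, G.Adj u w → code w (c u) = 1 := by
    intro w hw
    have h1 : code w (c u) ≤ G.dist w u := distToSet_le_dist_of_mem rfl
    have h2 : G.dist w u = 1 := SimpleGraph.dist_eq_one_iff_adj.mpr hw.symm
    have h3 : code w (c u) ≠ 0 :=
      distToSet_ne_zero hG ⟨u, rfl⟩ (fun hmem => hproper u w hw (Eq.symm hmem))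
    omega
  have hempty : ∀ i : Fin k, i ≠ c u → d i = 0 → (c ⁻¹' {i} : Set V) = ∅ := by
    intro i hi h0
    by_contra hne'
    have hne2 : (c ⁻¹' {i} : Set V).Nonempty := Set.nonempty_iff_ne_empty.mpr hne'
    have := mem_of_distToSet_eq_zero hG hne2 h0
    exact hi (Eq.symm this)
  -- the map F sends neighbors into T
  have hmaps : ∀ w ∈ G.neighborFinset u, F w ∈ T := by
    intro w hw'
    rw [SimpleGraph.mem_neighborFinset] at hw'
    have hcwcu : c w ≠ c u := fun h => hproper u w hw' h.symm
    rw [hT, Finset.mem_biUnion]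
    refine ⟨c w, by rw [hA, Finset.mem_filter]; exact ⟨Finset.mem_univ _, hcw1 w hw'⟩, ?_⟩
    rw [Finset.mem_product]
    refine ⟨by simp [hF], ?_⟩
    rw [Fintype.mem_piFinset]
    intro i
    by_cases h1 : i = c u
    · subst h1
      simp only [hS, if_pos rfl, hF]
      simp [hcodecu w hw', hdcu]
    · by_cases h2 : i = c w
      · subst h2
        simp only [hS, if_neg h1, if_pos rfl, hF]
        simp [hcodecw w]
      · by_cases h3 : d i = 1
        · have hne2 : (c ⁻¹' {i} : Set V).Nonempty := by
            by_contra hc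
            rw [Set.not_nonempty_iff_eq_empty] at hc
            have : d i = 0 := by rw [hd]; simp only; rw [hc]; exact distToSet_empty _
            omega
          have hcne : code w i ≠ 0 :=
            distToSet_ne_zero hG hne2 (fun hm => h2 (Eq.symm hm))
          have hle := hlip1 w hw' i
          simp only [hS, if_neg h1, if_neg h2, if_pos h3, hF]
          simp only [Finset.mem_insert, Finset.mem_singleton]
          omega
        · by_cases h4 : d i = 0
          · have hcl := hempty i h1 h4
            have hc0 : code w i = 0 := by
              rw [hcode_def]; simp only; rw [hcl]; exact distToSet_empty _
            simp only [hS, if_neg h1, if_neg h2, if_neg h3, if_pos h4, hF]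
            simp [hc0]
          · have hle := hlip1 w hw' i
            simp only [hS, if_neg h1, if_neg h2, if_neg h3, if_neg h4, hF]
            simp only [Finset.mem_range]
            omega
  -- F is injective on neighbors
  have hinj : Set.InjOn F (G.neighborFinset u : Set V) := by
    intro w hw' w' hw'' heq
    rw [Finset.mem_coe, SimpleGraph.mem_neighborFinset] at hw' hw''
    by_contra hne'
    obtain ⟨i, hi⟩ := hloc w w' hne'
    apply hi
    have e2 : (fun i => code w i - (d i - 1)) = fun i => code w' i - (d i - 1) :=
      congrArg Prod.snd heq
    have e2i := congrFun e2 i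
    have l1 := hlip2 w hw' i
    have l2 := hlip2 w' hw'' i
    simp only [hcode_def, hd] at e2i l1 l2
    omega
  -- counting
  have hprod : ∀ j ∈ A, ∏ i, (S j i).card = 2 ^ (A.card - 1) * 3 ^ B.card := by
    intro j hj
    have hja : d j = 1 := (Finset.mem_filter.mp hj).2
    have hjcu : j ≠ c u := by intro h; rw [h, hdcu] at hja; omega
    have step1 : ∏ i, (S j i).card = ∏ i ∈ (A.erase j) ∪ B, (S j i).card := by
      symm
      apply Finset.prod_subset (Finset.subset_univ _)
      intro x _ hx
      rw [Finset.mem_union] at hx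
      push_neg at hx
      obtain ⟨hx1, hx2⟩ := hx
      by_cases h1 : x = c u
      · simp [hS, h1]
      · by_cases h2 : x = j
        · simp [hS, h1, h2, hjcu]
        · by_cases h3 : d x = 1
          · exfalso
            apply hx1
            rw [Finset.mem_erase]
            exact ⟨h2, Finset.mem_filter.mpr ⟨Finset.mem_univ _, h3⟩⟩
          · have h4 : d x = 0 := by
              by_contra h4
              exact hx2 (Finset.mem_filter.mpr ⟨Finset.mem_univ _, by omega⟩)
            simp [hS, h1, h2, h3, h4]
    have step2 : Disjoint (A.erase j) B := by
      rw [Finset.disjoint_left]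
      intro x hx hxB
      have p1 := (Finset.mem_filter.mp (Finset.mem_of_mem_erase hx)).2
      have p2 := (Finset.mem_filter.mp hxB).2
      omega
    have step3 : ∀ x ∈ A.erase j, (S j x).card = 2 := by
      intro x hx
      obtain ⟨hxj, hxA⟩ := Finset.mem_erase.mp hx
      have hdx := (Finset.mem_filter.mp hxA).2
      have hxcu : x ≠ c u := by intro h; rw [h, hdcu] at hdx; omega
      simp [hS, hxcu, hxj, hdx]
    have step4 : ∀ x ∈ B, (S j x).card = 3 := by
      intro x hx
      have hdx := (Finset.mem_filter.mp hx).2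
      have hxcu : x ≠ c u := by intro h; rw [h, hdcu] at hdx; omega
      have hxj : x ≠ j := by intro h; rw [h, hja] at hdx; omega
      have h3 : d x ≠ 1 := by omega
      have h4 : d x ≠ 0 := by omega
      simp [hS, hxcu, hxj, h3, h4]
    rw [step1, Finset.prod_union step2, Finset.prod_congr rfl step3,
        Finset.prod_congr rfl step4, Finset.prod_const, Finset.prod_const,
        Finset.card_erase_of_mem hj]
  have hdeg : G.degree u ≤ T.card := by
    rw [← SimpleGraph.card_neighborFinset_eq_degree]
    exact Finset.card_le_card_of_injOn F hmaps hinj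
  have hT2 : T.card ≤ A.card * (2 ^ (A.card - 1) * 3 ^ B.card) := by
    calc T.card ≤ ∑ j ∈ A, (({j} : Finset (Fin k)) ×ˢ Fintype.piFinset (S j)).card :=
          Finset.card_biUnion_le
      _ = ∑ j ∈ A, ∏ i, (S j i).card := by
          refine Finset.sum_congr rfl (fun j _ => ?_)
          rw [Finset.card_product, Finset.card_singleton, one_mul, Fintype.card_piFinset]
      _ = ∑ _j ∈ A, (2 ^ (A.card - 1) * 3 ^ B.card) := Finset.sum_congr rfl hprod
      _ = A.card * (2 ^ (A.card - 1) * 3 ^ B.card) := by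
          rw [Finset.sum_const, smul_eq_mul]
  have hcard : A.card + B.card ≤ k - 1 := by
    have hdisj : Disjoint A B := by
      rw [Finset.disjoint_left]
      intro x hx hxB
      have p1 := (Finset.mem_filter.mp hx).2
      have p2 := (Finset.mem_filter.mp hxB).2
      omega
    have hsub : A ∪ B ⊆ Finset.univ.erase (c u) := by
      intro x hx
      rw [Finset.mem_union] at hx
      rw [Finset.mem_erase]
      refine ⟨?_, Finset.mem_univ _⟩
      rcases hx with hx | hx <;>
        · have := (Finset.mem_filter.mp hx).2
          intro h
          rw [h, hdcu] at this
          omega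
    calc A.card + B.card = (A ∪ B).card := (Finset.card_union_of_disjoint hdisj).symm
      _ ≤ (Finset.univ.erase (c u)).card := Finset.card_le_card hsub
      _ = k - 1 := by
          rw [Finset.card_erase_of_mem (Finset.mem_univ _), Finset.card_univ, Fintype.card_fin]
  calc G.degree u ≤ T.card := hdeg
    _ ≤ A.card * (2 ^ (A.card - 1) * 3 ^ B.card) := hT2
    _ = A.card * 2 ^ (A.card - 1) * 3 ^ B.card := by ring
    _ ≤ 4 * 3 ^ (k - 3) := arith_main _ _ _ hk hcard
end

section
/- Let G = S_n(a_1, a_2, …, a_n) be a palm and let G' = S_n(a_1, …, a_i + 1, …, a_n) be the palm obtained from G by lengthening its i-th leg by one vertex. Then χ_L(G') ≥ χ_L(G) − 1. -/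
open SimpleGraph

/-- The vertex set of the palm `S_n(a_1, …, a_n)`: a hub `none` and, for each leg
`i : Fin n` (representing leg `i+1`), vertices `j : Fin (a (i+1))`
(vertex `some ⟨i, j⟩` represents `a_{i+1, j+1}`). -/
def PalmVert (n : ℕ) (a : ℕ → ℕ) : Type :=
  Option ((i : Fin n) × Fin (a ((i : ℕ) + 1)))

/-- The palm `S_n(a_1, …, a_n)`: the star `K_{1,n}` whose `i`-th edge has been subdivided
`a_i - 1` times; the hub is joined to the first vertex of each leg, and consecutive
vertices along a leg are adjacent. -/
def Palm (n : ℕ) (a : ℕ → ℕ) : SimpleGraph (PalmVert n a) :=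
  SimpleGraph.fromRel fun u v =>
    match u, v with
    | none, some ⟨_, j⟩ => (j : ℕ) = 0
    | some ⟨i, j⟩, some ⟨i', j'⟩ => (i : ℕ) = (i' : ℕ) ∧ (j' : ℕ) = (j : ℕ) + 1
    | _, _ => False

namespace PalmAux

variable {V W : Type*} {G : SimpleGraph V} {H : SimpleGraph W}

lemma leaf_not_mem_support {w t : V} (hw : ∀ x, G.Adj w x → x = t)
    {u v : V} (p : G.Walk u v) : u ≠ w → v ≠ w → p.IsPath → w ∉ p.support := by
  induction p with
  | nil => intro hu _ _; simp [Ne.symm hu]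
  | @cons x y z hxy q ih =>
    intro hu hv hp
    rw [Walk.support_cons, List.mem_cons]
    push_neg
    refine ⟨Ne.symm hu, ?_⟩
    by_cases hy : y = w
    · subst hy
      have hx : x = t := hw x hxy.symm
      cases q with
      | nil => exact absurd rfl hv
      | @cons _ y' _ hwy' q' =>
        have hy' : y' = t := hw y' hwy'
        have hnd := hp.support_nodup
        rw [Walk.support_cons, List.nodup_cons] at hnd
        have hmem : x ∈ (Walk.cons hwy' q').support := by
          rw [Walk.support_cons]
          exact List.mem_cons_of_mem _ (by rw [hx, ← hy']; exact q'.start_mem_support)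
        exact absurd hmem hnd.1
    · exact ih hy hv hp.of_cons

lemma walk_lift (f : V → W) (hinj : Function.Injective f)
    (hadj : ∀ u v, G.Adj u v ↔ H.Adj (f u) (f v)) :
    ∀ {x y : W} (p : H.Walk x y), (∀ z ∈ p.support, z ∈ Set.range f) →
      ∀ {u v : V}, f u = x → f v = y → ∃ q : G.Walk u v, q.length = p.length := by
  intro x y p
  induction p with
  | nil =>
    intro _ u v hu hv
    have h : u = v := hinj (hu.trans hv.symm)
    subst h; exact ⟨Walk.nil, rfl⟩
  | @cons x' y' z' h q ih =>
    intro hsup u v hu hv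
    obtain ⟨u₂, hu₂⟩ := hsup y' (by
      rw [Walk.support_cons]
      exact List.mem_cons_of_mem _ q.start_mem_support)
    have hadj' : G.Adj u u₂ := (hadj u u₂).mpr (by rw [hu₂, hu]; exact h)
    obtain ⟨q', hq'⟩ := ih (fun z hz => hsup z (by
      rw [Walk.support_cons]; exact List.mem_cons_of_mem _ hz)) hu₂ hv
    exact ⟨Walk.cons hadj' q', by simp [hq']⟩

lemma dist_hom_le (f : V → W) (hadj : ∀ u v, G.Adj u v → H.Adj (f u) (f v))
    {u v : V} (h : G.Reachable u v) : H.dist (f u) (f v) ≤ G.dist u v := by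
  obtain ⟨p, hp⟩ := h.exists_walk_length_eq_dist
  have := SimpleGraph.dist_le (p.map ⟨f, hadj _ _⟩)
  rwa [Walk.length_map, hp] at this

lemma dist_eq_of_leaf (f : V → W) (hinj : Function.Injective f)
    (hadj : ∀ u v, G.Adj u v ↔ H.Adj (f u) (f v))
    {w t : W} (hw : ∀ x, H.Adj w x → x = t)
    (hrange : ∀ z, z ≠ w → z ∈ Set.range f)
    (hGconn : G.Preconnected) (u v : V) (hu : f u ≠ w) (hv : f v ≠ w) :
    G.dist u v = H.dist (f u) (f v) := by
  classical
  refine le_antisymm ?_ (dist_hom_le f (fun a b => (hadj a b).mp) (hGconn u v))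
  have hreach : H.Reachable (f u) (f v) := by
    obtain ⟨p, _⟩ := (hGconn u v).exists_walk_length_eq_dist
    exact ⟨p.map ⟨f, fun {a b} h => (hadj a b).mp h⟩⟩
  obtain ⟨p, hp⟩ := hreach.exists_walk_length_eq_dist
  have hnw : w ∉ p.bypass.support :=
    leaf_not_mem_support hw p.bypass hu hv p.bypass_isPath
  obtain ⟨q, hq⟩ := walk_lift f hinj hadj p.bypass
    (fun z hz => hrange z (fun h => hnw (h ▸ hz))) rfl rfl
  calc G.dist u v ≤ q.length := SimpleGraph.dist_le q
    _ = p.bypass.length := hq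
    _ ≤ p.length := Walk.length_bypass_le p
    _ = H.dist (f u) (f v) := hp

lemma exists_adj_dist {x y : W} (p : H.Walk x y) (hxy : x ≠ y) :
    ∃ z, H.Adj x z ∧ H.dist z y + 1 ≤ p.length := by
  cases p with
  | nil => exact absurd rfl hxy
  | cons h q =>
    exact ⟨_, h, by simpa using Nat.add_le_add_right (SimpleGraph.dist_le q) 1⟩

lemma dist_pendant {w t : W} (hw : ∀ x, H.Adj w x → x = t) (hadjwt : H.Adj w t)
    {x : W} (hx : x ≠ w) (hreach : H.Reachable x w) :
    H.dist x w = H.dist x t + 1 := by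
  obtain ⟨p, hp⟩ := hreach.symm.exists_walk_length_eq_dist
  obtain ⟨z, hz, hzd⟩ := exists_adj_dist p (Ne.symm hx)
  have hzt : z = t := hw z hz
  subst hzt
  rw [hp] at hzd
  refine le_antisymm ?_ ?_
  · have hxt : H.Reachable x z := hreach.trans hadjwt.reachable
    obtain ⟨r, hr⟩ := hxt.exists_walk_length_eq_dist
    have h2 := SimpleGraph.dist_le (r.concat hadjwt.symm)
    rwa [Walk.length_concat, hr] at h2
  · calc H.dist x z + 1 = H.dist z x + 1 := by rw [SimpleGraph.dist_comm]
      _ ≤ H.dist w x := hzd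
      _ = H.dist x w := by rw [SimpleGraph.dist_comm]

lemma distToSet_self (G : SimpleGraph V) {u : V} {S : Set V} (hu : u ∈ S) :
    distToSet G u S = 0 :=
  Nat.sInf_eq_zero.mpr (Or.inl ⟨u, hu, SimpleGraph.dist_self⟩)

lemma distToSet_ne_zero (G : SimpleGraph V) (hconn : G.Preconnected) {v : V} {S : Set V}
    (hS : S.Nonempty) (hv : v ∉ S) : distToSet G v S ≠ 0 := by
  intro h
  rcases Nat.sInf_eq_zero.mp h with h0 | hemp
  · obtain ⟨x, hxS, hx0⟩ := h0
    exact hv (((hconn v x).dist_eq_zero_iff.mp hx0) ▸ hxS)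
  · exact (hS.image _).ne_empty hemp

lemma distToSet_singleton (G : SimpleGraph V) (u x : V) :
    distToSet G u {x} = G.dist u x := by
  unfold distToSet
  rw [Set.image_singleton, csInf_singleton]

lemma exists_locating {V : Type*} [Fintype V] [DecidableEq V] (G : SimpleGraph V)
    (hconn : G.Preconnected) :
    ∃ k : ℕ, ∃ c : V → Fin k, IsLocatingColoring G c := by
  refine ⟨Fintype.card V, Fintype.equivFin V, fun u v huv h => huv.ne ((Fintype.equivFin V).injective h), ?_⟩
  intro u v huv
  refine ⟨Fintype.equivFin V u, ?_⟩
  have hcls : (⇑(Fintype.equivFin V)) ⁻¹' {Fintype.equivFin V u} = {u} := by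
    ext x; simp [EmbeddingLike.apply_eq_iff_eq]
  rw [hcls, distToSet_self G (Set.mem_singleton u), distToSet_singleton]
  exact Ne.symm ((hconn v u).dist_eq_zero_iff.not.mpr (Ne.symm huv))


variable {n : ℕ} {a b : ℕ → ℕ}

instance : DecidableEq (PalmVert n a) := by unfold PalmVert; exact inferInstance
instance : Fintype (PalmVert n a) := by unfold PalmVert; exact inferInstance

lemma adj_none_some (p : Fin n) (j : Fin (a ((p : ℕ) + 1))) :
    (Palm n a).Adj none (some ⟨p, j⟩) ↔ (j : ℕ) = 0 := by
  exact (fromRel_adj _ _ _).trans ⟨fun h => h.2.elim id False.elim,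
    fun h => ⟨(Option.some_ne_none _).symm, Or.inl h⟩⟩

lemma adj_some_some (p p' : Fin n) (j : Fin (a ((p : ℕ) + 1))) (j' : Fin (a ((p' : ℕ) + 1))) :
    (Palm n a).Adj (some ⟨p, j⟩) (some ⟨p', j'⟩) ↔
      (p : ℕ) = (p' : ℕ) ∧ ((j' : ℕ) = (j : ℕ) + 1 ∨ (j : ℕ) = (j' : ℕ) + 1) := by
  refine (fromRel_adj _ _ _).trans ?_
  constructor
  · rintro ⟨hne, h | h⟩
    · exact ⟨h.1, Or.inl h.2⟩
    · exact ⟨h.1.symm, Or.inr h.2⟩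
  · rintro ⟨hp, h⟩
    have hne : some (⟨p, j⟩ : (i : Fin n) × Fin (a ((i : ℕ) + 1))) ≠ some ⟨p', j'⟩ := by
      intro heq
      rw [Option.some.injEq] at heq
      have h1 : p = p' := congrArg Sigma.fst heq
      subst h1
      have h2 : j = j' := by simpa using heq
      subst h2
      omega
    rcases h with h | h
    · exact ⟨hne, Or.inl ⟨hp, h⟩⟩
    · exact ⟨hne, Or.inr ⟨hp.symm, h⟩⟩


lemma adj_some_none (p : Fin n) (j : Fin (a ((p : ℕ) + 1))) :
    (Palm n a).Adj (some ⟨p, j⟩) none ↔ (j : ℕ) = 0 := by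
  exact (adj_comm _ _ _).trans (adj_none_some p j)

lemma palm_reachable : ∀ v : PalmVert n a, (Palm n a).Reachable none v := by
  intro v
  cases v with
  | none => exact Reachable.refl none
  | some x =>
    obtain ⟨p, j⟩ := x
    obtain ⟨m, hm⟩ := j
    induction m with
    | zero => exact Adj.reachable ((adj_none_some p ⟨0, hm⟩).mpr rfl)
    | succ m ih =>
      refine (ih (by omega)).trans (Adj.reachable ?_)
      exact (adj_some_some p p ⟨m, by omega⟩ ⟨m + 1, hm⟩).mpr ⟨rfl, Or.inl rfl⟩

lemma palm_preconnected : (Palm n a).Preconnected :=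
  fun u v => (palm_reachable u).symm.trans (palm_reachable v)

variable (hab : ∀ p : Fin n, a ((p : ℕ) + 1) ≤ b ((p : ℕ) + 1))

def palmMap : PalmVert n a → PalmVert n b :=
  Option.map fun x => ⟨x.1, Fin.castLE (hab x.1) x.2⟩

@[simp] lemma palmMap_none : palmMap hab none = none := rfl

@[simp] lemma palmMap_some (p : Fin n) (j : Fin (a ((p : ℕ) + 1))) :
    palmMap hab (some ⟨p, j⟩) = some ⟨p, Fin.castLE (hab p) j⟩ := rfl

lemma palmMap_injective : Function.Injective (palmMap hab) := by
  intro x y h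
  cases x with
  | none => cases y with
    | none => rfl
    | some y => simp [palmMap] at h
  | some x =>
    cases y with
    | none => simp [palmMap] at h
    | some y =>
      obtain ⟨p, j⟩ := x
      obtain ⟨p', j'⟩ := y
      rw [palmMap_some, palmMap_some] at h
      replace h := Option.some.inj h
      have h1 : p = p' := congrArg Sigma.fst h
      subst h1
      have h2 : Fin.castLE (hab p) j = Fin.castLE (hab p) j' := by simpa using h
      have h4 := congrArg Fin.val h2
      simp only [Fin.coe_castLE] at h4
      rw [Fin.ext h4]

lemma palmMap_adj (u v : PalmVert n a) :
    (Palm n a).Adj u v ↔ (Palm n b).Adj (palmMap hab u) (palmMap hab v) := by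
  cases u with
  | none =>
    cases v with
    | none => exact iff_of_false (SimpleGraph.irrefl _) (SimpleGraph.irrefl _)
    | some x =>
      obtain ⟨p, j⟩ := x
      rw [palmMap_none, palmMap_some, adj_none_some, adj_none_some]
      simp
  | some x =>
    obtain ⟨p, j⟩ := x
    cases v with
    | none =>
      rw [palmMap_none, palmMap_some, adj_some_none, adj_some_none]
      simp
    | some y =>
      obtain ⟨p', j'⟩ := y
      rw [palmMap_some, palmMap_some, adj_some_some, adj_some_some]
      simp


lemma sInf_dist_eq_aux {W : Type*} (H : SimpleGraph W) (C : Set W) (p q : W) (E : Set W)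
    (hE : ∀ z ∈ E, H.dist p z = H.dist q z)
    (hS : sInf (H.dist p '' (C \ E)) = sInf (H.dist q '' (C \ E))) :
    distToSet H p C ≤ distToSet H q C := by
  unfold distToSet
  rcases C.eq_empty_or_nonempty with rfl | hC
  · simp
  · obtain ⟨z, hzC, hzd⟩ := Nat.sInf_mem (hC.image (H.dist q))
    by_cases hzE : z ∈ E
    · calc sInf (H.dist p '' C) ≤ H.dist p z := Nat.sInf_le ⟨z, hzC, rfl⟩
        _ = H.dist q z := hE z hzE
        _ = _ := hzd
    · have hzS : z ∈ C \ E := ⟨hzC, hzE⟩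
      obtain ⟨z', hz', hz'd⟩ := Nat.sInf_mem (Set.Nonempty.image (H.dist p) ⟨z, hzS⟩)
      calc sInf (H.dist p '' C) ≤ H.dist p z' := Nat.sInf_le ⟨z', hz'.1, rfl⟩
        _ = sInf (H.dist p '' (C \ E)) := hz'd
        _ = sInf (H.dist q '' (C \ E)) := hS
        _ ≤ H.dist q z := Nat.sInf_le ⟨z, hzS, rfl⟩
        _ = _ := hzd

end PalmAux
/-- If `G = S_n(a_1, …, a_n)` is a palm and `G'` is obtained from `G` by
lengthening its `i`-th leg by one vertex, then `χ_L(G') ≥ χ_L(G) - 1`. -/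
theorem locatingChromaticNumber_palm_lengthen (n : ℕ) (hn : 2 ≤ n) (a : ℕ → ℕ)
    (ha : ∀ j, 1 ≤ j → j ≤ n → 1 ≤ a j) (i : ℕ) (hi₁ : 1 ≤ i) (hi₂ : i ≤ n) :
    (locatingChromaticNumber (Palm n a) : ℤ) - 1 ≤
      (locatingChromaticNumber (Palm n (Function.update a i (a i + 1))) : ℤ) := by
  classical
  set b : ℕ → ℕ := Function.update a i (a i + 1) with hb
  have hbi : b i = a i + 1 := Function.update_self i _ a
  have hbne : ∀ j, j ≠ i → b j = a j := fun j hj => Function.update_of_ne hj _ _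
  have hab : ∀ p : Fin n, a ((p : ℕ) + 1) ≤ b ((p : ℕ) + 1) := by
    intro p
    by_cases hp : ((p : ℕ) + 1) = i
    · rw [hp, hbi]; omega
    · rw [hbne _ hp]
  have hai : 1 ≤ a i := ha i hi₁ hi₂
  set f : PalmVert n a → PalmVert n b := PalmAux.palmMap hab with hfdef
  have hPlt : i - 1 < n := by omega
  set P : Fin n := ⟨i - 1, hPlt⟩ with hP
  have hPi : ((P : ℕ) + 1) = i := by simp only [hP]; omega
  have haP : a ((P : ℕ) + 1) = a i := by rw [hPi]
  have hbP : b ((P : ℕ) + 1) = a i + 1 := by rw [hPi, hbi]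
  have hwlt : a i < b ((P : ℕ) + 1) := by omega
  have hvlt : a i - 1 < a ((P : ℕ) + 1) := by omega
  set w : PalmVert n b := some ⟨P, ⟨a i, hwlt⟩⟩ with hwdef
  set vstar : PalmVert n a := some ⟨P, ⟨a i - 1, hvlt⟩⟩ with hvdef
  have hfv : f vstar = some ⟨P, Fin.castLE (hab P) ⟨a i - 1, hvlt⟩⟩ := rfl
  -- `f` never hits `w`
  have hfw : ∀ u : PalmVert n a, f u ≠ w := by
    intro u
    cases u with
    | none => rw [hfdef, PalmAux.palmMap_none, hwdef]; exact fun h => Option.some_ne_none _ h.symm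
    | some x =>
      obtain ⟨p, j⟩ := x
      rw [hfdef, PalmAux.palmMap_some, hwdef]
      intro h
      replace h := Option.some.inj h
      have h1 : ((p : ℕ)) = i - 1 := congrArg Fin.val (congrArg Sigma.fst h)
      have h2 : ((Fin.castLE (hab p) j : Fin (b ((p : ℕ) + 1))) : ℕ) = a i :=
        congrArg (fun s : (q : Fin n) × Fin (b ((q : ℕ) + 1)) => (s.2 : ℕ)) h
      simp only [Fin.coe_castLE] at h2
      have h3 : (j : ℕ) < a ((p : ℕ) + 1) := j.isLt
      have h4 : ((p : ℕ) + 1) = i := by omega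
      have h5 : a ((p : ℕ) + 1) = a i := by rw [h4]
      omega
  -- everything except `w` is in the range of `f`
  have hrange : ∀ z : PalmVert n b, z ≠ w → z ∈ Set.range f := by
    intro z hz
    cases z with
    | none => exact ⟨none, rfl⟩
    | some x =>
      obtain ⟨p, j⟩ := x
      have hjlt : (j : ℕ) < a ((p : ℕ) + 1) := by
        by_cases hp : ((p : ℕ) + 1) = i
        · have hpP : p = P := Fin.ext (by omega)
          subst hpP
          have hj : (j : ℕ) ≠ a i := by
            intro hje
            exact hz (by rw [hwdef]; exact congrArg (fun t => some (⟨P, t⟩ :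
              (q : Fin n) × Fin (b ((q : ℕ) + 1)))) (Fin.ext hje))
          have := j.isLt
          omega
        · have h6 := j.isLt
          have h7 : b ((p : ℕ) + 1) = a ((p : ℕ) + 1) := hbne _ hp
          omega
      refine ⟨some ⟨p, ⟨(j : ℕ), hjlt⟩⟩, ?_⟩
      rw [hfdef, PalmAux.palmMap_some]
      exact congrArg (fun t => some (⟨p, t⟩ : (q : Fin n) × Fin (b ((q : ℕ) + 1)))) (Fin.ext rfl)
  -- `w` is a leaf whose unique neighbour is `f vstar`
  have hleaf : ∀ x, (Palm n b).Adj w x → x = f vstar := by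
    intro x hx
    cases x with
    | none =>
      replace hx := (PalmAux.adj_none_some P ⟨a i, hwlt⟩).mp hx.symm
      exact absurd hx (by simp; omega)
    | some y =>
      obtain ⟨p', j'⟩ := y
      rw [hwdef, PalmAux.adj_some_some] at hx
      obtain ⟨hp', hj'⟩ := hx
      have hp'P : p' = P := Fin.ext (by omega)
      subst hp'P
      have hjb : (j' : ℕ) < a i + 1 := by have := j'.isLt; omega
      have hj'v : (j' : ℕ) = a i - 1 := by
        rcases hj' with h | h
        · simp at h; omega
        · simp at h; omega
      rw [hfv]
      exact congrArg (fun t => some (⟨P, t⟩ : (q : Fin n) × Fin (b ((q : ℕ) + 1))))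
        (Fin.ext (by simp [Fin.coe_castLE]; omega))
  have hadjwv : (Palm n b).Adj w (f vstar) := by
    rw [hfv, hwdef, PalmAux.adj_some_some]
    refine ⟨rfl, Or.inr ?_⟩
    simp [Fin.coe_castLE]
    omega
  have hGpre : (Palm n a).Preconnected := PalmAux.palm_preconnected
  have hG'pre : (Palm n b).Preconnected := PalmAux.palm_preconnected
  have hf_inj : Function.Injective f := PalmAux.palmMap_injective hab
  have hf_adj : ∀ u v, (Palm n a).Adj u v ↔ (Palm n b).Adj (f u) (f v) :=
    PalmAux.palmMap_adj hab
  have hdist : ∀ u v, (Palm n a).dist u v = (Palm n b).dist (f u) (f v) :=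
    fun u v => PalmAux.dist_eq_of_leaf f hf_inj hf_adj hleaf hrange hGpre u v (hfw u) (hfw v)
  have hpend : ∀ u, (Palm n b).dist (f u) w = (Palm n b).dist (f u) (f vstar) + 1 :=
    fun u => PalmAux.dist_pendant hleaf hadjwv (hfw u) (hG'pre (f u) w)
  -- the locating chromatic number of the longer palm is attained
  obtain ⟨k0, c0, hc0⟩ := PalmAux.exists_locating (Palm n b) hG'pre
  set k := locatingChromaticNumber (Palm n b) with hk
  have hne : {m : ℕ | ∃ c' : PalmVert n b → Fin m, IsLocatingColoring (Palm n b) c'}.Nonempty :=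
    ⟨k0, c0, hc0⟩
  have hkmem : ∃ c' : PalmVert n b → Fin k, IsLocatingColoring (Palm n b) c' := by
    rw [hk, locatingChromaticNumber]
    exact Nat.sInf_mem hne
  obtain ⟨c', hc'⟩ := hkmem
  unfold IsLocatingColoring at hc'
  -- build a locating (k+1)-coloring of the shorter palm
  set c : PalmVert n a → Fin (k + 1) :=
    fun u => if u = vstar then Fin.last k else (c' (f u)).castSucc with hcdef
  have hlastne : ∀ m : Fin k, (Fin.castSucc m) ≠ Fin.last k :=
    fun m => (Fin.castSucc_lt_last m).ne
  have hcv : c vstar = Fin.last k := by rw [hcdef]; simp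
  have hcn : ∀ u, u ≠ vstar → c u = (c' (f u)).castSucc := by
    intro u hu; rw [hcdef]; simp [hu]
  have hproper : ∀ u v, (Palm n a).Adj u v → c u ≠ c v := by
    intro u v huv
    by_cases hu : u = vstar <;> by_cases hv2 : v = vstar
    · exact absurd (hu.trans hv2.symm) huv.ne
    · rw [hu, hcv, hcn v hv2]; exact fun h => hlastne _ h.symm
    · rw [hv2, hcv, hcn u hu]; exact hlastne _
    · rw [hcn u hu, hcn v hv2]
      intro h
      exact hc'.1 _ _ ((hf_adj u v).mp huv) (Fin.castSucc_injective k h)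
  have hlocating : ∀ u v : PalmVert n a, u ≠ v →
      ∃ m : Fin (k + 1), distToSet (Palm n a) u (c ⁻¹' {m}) ≠ distToSet (Palm n a) v (c ⁻¹' {m}) := by
    intro u v huv
    by_cases hcc : c u = c v
    · -- same colour
      have hu1 : u ≠ vstar := by
        intro h
        apply huv
        by_contra hv2
        have hv3 : v ≠ vstar := fun hv4 => huv (h.trans hv4.symm)
        rw [h, hcv, hcn v hv3] at hcc
        exact hlastne _ hcc.symm
      have hv1 : v ≠ vstar := by
        intro h
        rw [h, hcv, hcn u hu1] at hcc
        exact hlastne _ hcc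
      by_cases hdv : (Palm n a).dist u vstar = (Palm n a).dist v vstar
      · -- equal distance to vstar: use a resolving class from the longer palm
        have hfuv : f u ≠ f v := fun h => huv (hf_inj h)
        obtain ⟨ℓ, hℓ⟩ := hc'.2 (f u) (f v) hfuv
        refine ⟨Fin.castSucc ℓ, ?_⟩
        set C' : Set (PalmVert n b) := c' ⁻¹' {ℓ} with hC'
        set E : Set (PalmVert n b) := {f vstar, w} with hE
        have hcls : c ⁻¹' {Fin.castSucc ℓ} = {x | x ≠ vstar ∧ c' (f x) = ℓ} := by
          ext x
          simp only [Set.mem_preimage, Set.mem_singleton_iff, Set.mem_setOf_eq]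
          by_cases hx : x = vstar
          · rw [hx, hcv]
            constructor
            · intro h; exact absurd h.symm (hlastne ℓ)
            · rintro ⟨h1, _⟩; exact absurd rfl h1
          · rw [hcn x hx]
            constructor
            · intro h; exact ⟨hx, Fin.castSucc_injective k h⟩
            · rintro ⟨_, h2⟩; rw [h2]
        have himg : f '' (c ⁻¹' {Fin.castSucc ℓ}) = C' \ E := by
          rw [hcls]
          ext y
          constructor
          · rintro ⟨x, ⟨hx1, hx2⟩, rfl⟩
            refine ⟨hx2, ?_⟩
            simp only [hE, Set.mem_insert_iff, Set.mem_singleton_iff]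
            push_neg
            exact ⟨fun h => hx1 (hf_inj h), hfw x⟩
          · rintro ⟨hy1, hy2⟩
            simp only [hE, Set.mem_insert_iff, Set.mem_singleton_iff] at hy2
            push_neg at hy2
            obtain ⟨x, rfl⟩ := hrange y hy2.2
            exact ⟨x, ⟨fun h => hy2.1 (by rw [h]), hy1⟩, rfl⟩
        have hred : ∀ x : PalmVert n a, distToSet (Palm n a) x (c ⁻¹' {Fin.castSucc ℓ}) =
            sInf ((Palm n b).dist (f x) '' (C' \ E)) := by
          intro x
          unfold distToSet
          rw [← himg, Set.image_image]
          congr 1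
          exact Set.image_congr fun z _ => hdist x z
        rw [hred u, hred v]
        have hdE : ∀ z ∈ E, (Palm n b).dist (f u) z = (Palm n b).dist (f v) z := by
          intro z hz
          rcases (by simpa only [hE, Set.mem_insert_iff, Set.mem_singleton_iff] using hz :
              z = f vstar ∨ z = w) with h | h
          · rw [h, ← hdist u vstar, ← hdist v vstar]; exact hdv
          · rw [h, hpend u, hpend v, ← hdist u vstar, ← hdist v vstar, hdv]
        intro hEq
        exact hℓ (le_antisymm
          (PalmAux.sInf_dist_eq_aux _ C' (f u) (f v) E hdE hEq)
          (PalmAux.sInf_dist_eq_aux _ C' (f v) (f u) E (fun z hz => (hdE z hz).symm) hEq.symm))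
      · -- distinct distance to vstar: resolve with the new colour class {vstar}
        refine ⟨Fin.last k, ?_⟩
        have hcls : c ⁻¹' {Fin.last k} = {vstar} := by
          ext x
          simp only [Set.mem_preimage, Set.mem_singleton_iff]
          constructor
          · intro hx
            by_contra hxv
            rw [hcn x hxv] at hx
            exact hlastne _ hx
          · intro hx; rw [hx, hcv]
        rw [hcls, PalmAux.distToSet_singleton, PalmAux.distToSet_singleton]
        exact hdv
    · -- distinct colours resolve themselves
      refine ⟨c u, ?_⟩
      have h1 : distToSet (Palm n a) u (c ⁻¹' {c u}) = 0 :=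
        PalmAux.distToSet_self _ rfl
      have h2 : distToSet (Palm n a) v (c ⁻¹' {c u}) ≠ 0 :=
        PalmAux.distToSet_ne_zero _ hGpre ⟨u, rfl⟩
          (fun hmem => hcc (Set.mem_singleton_iff.mp hmem).symm)
      rw [h1]
      exact Ne.symm h2
  have hcloc : IsLocatingColoring (Palm n a) c := ⟨hproper, hlocating⟩
  have hle : locatingChromaticNumber (Palm n a) ≤ k + 1 := by
    rw [locatingChromaticNumber]
    exact Nat.sInf_le ⟨c, hcloc⟩
  omega
end

section
/- Fix a positive integer k. The sequence n ↦ χ_L(S_n(k)) is unbounded: for every M there exists n ≥ 2 such that χ_L(S_n(k)) > M. -/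
open SimpleGraph

/- ### Auxiliary lemmas -/

/-- The relation generating the palm, as a named definition. -/
def palmRel (n : ℕ) (a : ℕ → ℕ) : PalmVert n a → PalmVert n a → Prop := fun u v =>
  match u, v with
  | none, some ⟨_, j⟩ => (j : ℕ) = 0
  | some ⟨i, j⟩, some ⟨i', j'⟩ => (i : ℕ) = (i' : ℕ) ∧ (j' : ℕ) = (j : ℕ) + 1
  | _, _ => False

lemma palm_adj_iff {n : ℕ} {a : ℕ → ℕ} (u v : PalmVert n a) :
    (Palm n a).Adj u v ↔ u ≠ v ∧ (palmRel n a u v ∨ palmRel n a v u) :=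
  Iff.rfl

section Aux

variable {n k : ℕ}

instance (a : ℕ → ℕ) : Fintype (PalmVert n a) :=
  inferInstanceAs (Fintype (Option _))

instance (a : ℕ → ℕ) : DecidableEq (PalmVert n a) :=
  inferInstanceAs (DecidableEq (Option _))

lemma palm_adj_hub (i : Fin n) (h : 0 < k) :
    (Palm n (fun _ => k)).Adj none (some ⟨i, ⟨0, h⟩⟩) := by
  refine (palm_adj_iff _ _).mpr ?_
  exact ⟨(Option.some_ne_none _).symm, Or.inl rfl⟩

lemma palm_adj_step (i : Fin n) (j : ℕ) (h : j < k) (h' : j + 1 < k) :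
    (Palm n (fun _ => k)).Adj (some ⟨i, ⟨j, h⟩⟩) (some ⟨i, ⟨j + 1, h'⟩⟩) := by
  refine (palm_adj_iff _ _).mpr ?_
  refine ⟨?_, Or.inl ⟨rfl, rfl⟩⟩
  intro hx
  have : (⟨j, h⟩ : Fin k) = ⟨j + 1, h'⟩ := by
    have := Option.some.inj hx
    exact eq_of_heq (Sigma.mk.inj_iff.mp this).2
  simp [Fin.ext_iff] at this

lemma palm_reachable_hub (i : Fin n) (j : ℕ) (h : j < k) :
    (Palm n (fun _ => k)).Reachable none (some ⟨i, ⟨j, h⟩⟩) := by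
  induction j with
  | zero => exact (palm_adj_hub i (by omega)).reachable
  | succ m ih =>
      exact (ih (Nat.lt_of_succ_lt h)).trans
        (palm_adj_step i m (Nat.lt_of_succ_lt h) h).reachable

lemma palm_preconnected : (Palm n (fun _ => k)).Preconnected := by
  intro u v
  have key : ∀ w : PalmVert n (fun _ => k), (Palm n (fun _ => k)).Reachable none w := by
    rintro (_ | ⟨i, j, hj⟩)
    · exact SimpleGraph.Reachable.refl _
    · exact palm_reachable_hub i j hj
  exact (key u).symm.trans (key v)

/-- distance is preserved by an involutive adjacency-preserving map. -/
lemma dist_invol {V : Type*} {G : SimpleGraph V} (f : V → V)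
    (hinv : ∀ x, f (f x) = x) (hadj : ∀ u v, G.Adj u v → G.Adj (f u) (f v))
    (u v : V) : G.dist (f u) (f v) = G.dist u v := by
  let φ : G →g G := ⟨f, fun h => hadj _ _ h⟩
  have le : ∀ x y : V, G.dist (f x) (f y) ≤ G.dist x y := by
    intro x y
    by_cases hr : G.Reachable x y
    · obtain ⟨p, hp⟩ := hr.exists_walk_length_eq_dist
      calc G.dist (f x) (f y) ≤ (p.map φ).length := SimpleGraph.dist_le _
        _ = G.dist x y := by rw [SimpleGraph.Walk.length_map, hp]
    · rw [SimpleGraph.dist_eq_zero_of_not_reachable hr]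
      rw [SimpleGraph.dist_eq_zero_of_not_reachable]
      intro hr'
      have h2 : G.Reachable (f (f x)) (f (f y)) := hr'.map φ
      rw [hinv, hinv] at h2
      exact hr h2
  refine le_antisymm (le u v) ?_
  have := le (f u) (f v)
  simpa [hinv] using this
end Aux

/-- For a fixed positive integer `k`, the sequence `n ↦ χ_L(S_n(k))` is
unbounded: for every `M` there is `n ≥ 2` with `χ_L(S_n(k)) > M`. -/
theorem locatingChromaticNumber_regularPalm_unbounded (k : ℕ) (hk : 1 ≤ k) (M : ℕ) :
    ∃ n : ℕ, 2 ≤ n ∧ M < locatingChromaticNumber (Palm n (fun _ => k)) := by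
  classical
  set n := max 2 (M ^ k + 1) with hn
  refine ⟨n, le_max_left _ _, ?_⟩
  set G := Palm n (fun _ => k) with hG
  set S : Set ℕ := {m : ℕ | ∃ c : PalmVert n (fun _ => k) → Fin m, IsLocatingColoring G c}
    with hS
  -- The set of valid numbers of colors is nonempty: color every vertex differently.
  have hne : S.Nonempty := by
    refine ⟨Fintype.card (PalmVert n (fun _ => k)), Fintype.equivFin _, ?_, ?_⟩
    · intro u v huv
      exact fun h => huv.ne ((Fintype.equivFin _).injective h)
    · intro u v huv
      refine ⟨Fintype.equivFin _ u, ?_⟩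
      have hpre : (Fintype.equivFin (PalmVert n (fun _ => k))) ⁻¹'
          {Fintype.equivFin _ u} = {u} := by
        ext x
        simp only [Set.mem_preimage, Set.mem_singleton_iff]
        exact ⟨fun h => (Fintype.equivFin _).injective h, fun h => by rw [h]⟩
      rw [hpre]
      have h1 : distToSet G u {u} = 0 := by
        simp [distToSet, SimpleGraph.dist_self]
      have h2 : distToSet G v {u} = G.dist v u := by
        simp [distToSet]
      rw [h1, h2]
      have : 0 < G.dist v u :=
        (palm_preconnected v u).pos_dist_of_ne huv.symm
      omega
  -- Every valid number of colors exceeds M.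
  have hbig : ∀ m ∈ S, M < m := by
    rintro m ⟨c, hc_proper, hc_loc⟩
    by_contra hle
    push_neg at hle
    -- pigeonhole: two legs get the same color sequence
    have hpigeon : ∃ i i' : Fin n, i ≠ i' ∧
        (fun j : Fin k => c (some ⟨i, j⟩)) = (fun j : Fin k => c (some ⟨i', j⟩)) := by
      have hlt : Fintype.card (Fin k → Fin m) < Fintype.card (Fin n) := by
        simp only [Fintype.card_fun, Fintype.card_fin]
        calc m ^ k ≤ M ^ k := Nat.pow_le_pow_left hle k
          _ < M ^ k + 1 := Nat.lt_succ_self _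
          _ ≤ n := le_max_right _ _
      obtain ⟨i, i', hne', heq⟩ := Fintype.exists_ne_map_eq_of_card_lt
        (fun i : Fin n => fun j : Fin k => c (some ⟨i, j⟩)) hlt
      exact ⟨i, i', hne', heq⟩
    obtain ⟨i, i', hii', hceq⟩ := hpigeon
    have hcj : ∀ j : Fin k, c (some ⟨i, j⟩) = c (some ⟨i', j⟩) := fun j =>
      congrFun hceq j
    -- the swap automorphism
    set σ : PalmVert n (fun _ => k) → PalmVert n (fun _ => k) :=
      Option.map (fun x => ⟨Equiv.swap i i' x.1, x.2⟩) with hσ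
    have hinv : ∀ x, σ (σ x) = x := by
      rintro (_ | ⟨p, j⟩)
      · rfl
      · simp [hσ, Equiv.swap_apply_self]; rfl
    have hσ_inj : Function.Injective σ := Function.LeftInverse.injective hinv
    have hadj : ∀ u v, G.Adj u v → G.Adj (σ u) (σ v) := by
      have key : ∀ u v : PalmVert n (fun _ => k),
          palmRel n (fun _ => k) u v → palmRel n (fun _ => k) (σ u) (σ v) := by
        rintro (_ | ⟨p, j⟩) (_ | ⟨q, j'⟩) h
        · exact h
        · exact h
        · exact h
        · obtain ⟨h1, h2⟩ := h
          refine ⟨?_, h2⟩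
          have : p = q := Fin.ext h1
          subst this; rfl
      intro u v h
      rw [hG, palm_adj_iff] at h ⊢
      obtain ⟨hne', h⟩ := h
      refine ⟨fun hc => hne' (hσ_inj hc), ?_⟩
      rcases h with h | h
      · exact Or.inl (key _ _ h)
      · exact Or.inr (key _ _ h)
    have hcσ : ∀ x, c (σ x) = c x := by
      rintro (_ | ⟨p, j⟩)
      · rfl
      · show c (some (⟨Equiv.swap i i' p, j⟩ : (i : Fin n) × Fin ((fun _ => k) ((i : ℕ) + 1)))) = c (some ⟨p, j⟩)
        rcases eq_or_ne p i with rfl | hpi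
        · rw [Equiv.swap_apply_left]; exact (hcj j).symm
        rcases eq_or_ne p i' with rfl | hpi'
        · rw [Equiv.swap_apply_right]; exact hcj j
        · rw [Equiv.swap_apply_of_ne_of_ne hpi hpi']
    -- color classes are σ-invariant
    have hclass : ∀ col : Fin m, σ '' (c ⁻¹' {col}) = c ⁻¹' {col} := by
      intro col
      ext x
      constructor
      · rintro ⟨y, hy, rfl⟩
        simpa [hcσ] using hy
      · intro hx
        exact ⟨σ x, by simpa [hcσ] using hx, hinv x⟩
    have hdist := dist_invol (G := G) σ hinv hadj
    have hDset : ∀ (u : PalmVert n (fun _ => k)) (col : Fin m),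
        distToSet G (σ u) (c ⁻¹' {col}) = distToSet G u (c ⁻¹' {col}) := by
      intro u col
      unfold distToSet
      congr 1
      conv_lhs => rw [← hclass col]
      rw [← Set.image_comp]
      apply Set.image_congr
      intro x _
      exact hdist u x
    -- the two unresolvable vertices
    have h0 : (0 : ℕ) < k := hk
    set u : PalmVert n (fun _ => k) := some ⟨i, ⟨0, h0⟩⟩ with hu
    have hσu : σ u = some ⟨i', ⟨0, h0⟩⟩ := by
      simp [hσ, hu, Equiv.swap_apply_left]; rfl
    have huv : u ≠ σ u := by
      rw [hσu, hu]
      intro h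
      exact hii' (congrArg (fun o => o.elim i (·.1)) h)
    obtain ⟨col, hcol⟩ := hc_loc u (σ u) huv
    exact hcol ((hDset u col).symm)
  have hmem : locatingChromaticNumber G ∈ S := Nat.sInf_mem hne
  exact hbig _ hmem
end

section
/- For every positive integer k and every n ≥ 2, n ≤ (χ_L(S_n(k)))^k; equivalently, χ_L(S_n(k)) ≥ n^{1/k}. -/
open SimpleGraph

section Aux

variable (n k : ℕ)

abbrev RP (n k : ℕ) : SimpleGraph (Option ((_ : Fin n) × Fin k)) := Palm n (fun _ => k)

lemma adj_hub (i : Fin n) (h0 : 0 < k) : (RP n k).Adj none (some ⟨i, ⟨0, h0⟩⟩) := by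
  refine ⟨(by intro h; cases h), Or.inl ?_⟩
  simp

lemma adj_step (i : Fin n) (j j' : Fin k) (h : (j' : ℕ) = (j : ℕ) + 1) :
    (RP n k).Adj (some ⟨i, j⟩) (some ⟨i, j'⟩) := by
  refine ⟨?_, Or.inl ?_⟩
  · have hj : j ≠ j' := by intro e; rw [e] at h; omega
    intro heq
    replace heq : (⟨i, j⟩ : (_ : Fin n) × Fin k) = ⟨i, j'⟩ := Option.some.inj heq
    exact hj (Sigma.mk.inj_iff.mp heq).2.eq
  · exact ⟨rfl, h⟩

lemma reach_hub (i : Fin n) : ∀ (j : ℕ) (h : j < k), (RP n k).Reachable none (some ⟨i, ⟨j, h⟩⟩) := by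
  intro j
  induction j with
  | zero => intro h; exact (adj_hub n k i h).reachable
  | succ m ih => intro h
                 exact (ih (by omega)).trans (adj_step n k i ⟨m, by omega⟩ ⟨m+1, h⟩ rfl).reachable

lemma palm_connected (hn : 0 < n) (hk : 0 < k) : (RP n k).Connected := by
  rw [connected_iff_exists_forall_reachable]
  refine ⟨none, ?_⟩
  rintro (_ | ⟨i, j⟩)
  · exact Reachable.refl _
  · exact reach_hub n k i j j.isLt

def legSwapFun (i i' : Fin n) : Option ((_ : Fin n) × Fin k) → Option ((_ : Fin n) × Fin k) :=
  fun v => match v with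
  | none => none
  | some ⟨a, j⟩ => some ⟨Equiv.swap i i' a, j⟩

lemma legSwapFun_invol (i i' : Fin n) (v : Option ((_ : Fin n) × Fin k)) :
    legSwapFun n k i i' (legSwapFun n k i i' v) = v := by
  rcases v with _ | ⟨a, j⟩
  · rfl
  · simp [legSwapFun, Equiv.swap_apply_self]

def legSwapEquiv (i i' : Fin n) : Option ((_ : Fin n) × Fin k) ≃ Option ((_ : Fin n) × Fin k) where
  toFun := legSwapFun n k i i'
  invFun := legSwapFun n k i i'
  left_inv := legSwapFun_invol n k i i'
  right_inv := legSwapFun_invol n k i i'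

lemma legSwap_adj (i i' : Fin n) (u v : Option ((_ : Fin n) × Fin k)) (h : (RP n k).Adj u v) :
    (RP n k).Adj (legSwapFun n k i i' u) (legSwapFun n k i i' v) := by
  have hne' : legSwapFun n k i i' u ≠ legSwapFun n k i i' v := by
    intro he
    apply h.ne
    have := congrArg (legSwapFun n k i i') he
    rwa [legSwapFun_invol, legSwapFun_invol] at this
  obtain ⟨hne, hrel⟩ := h
  refine ⟨hne', ?_⟩
  rcases u with _ | ⟨a, ja⟩ <;> rcases v with _ | ⟨b, jb⟩
  · exact hrel
  · rcases hrel with hr | hr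
    · exact Or.inl hr
    · exact Or.inr hr
  · rcases hrel with hr | hr
    · exact Or.inl hr
    · exact Or.inr hr
  · rcases hrel with ⟨h1, h2⟩ | ⟨h1, h2⟩
    · obtain rfl : a = b := Fin.val_injective h1
      exact Or.inl ⟨rfl, h2⟩
    · obtain rfl : b = a := Fin.val_injective h1
      exact Or.inr ⟨rfl, h2⟩

def legSwapIso (i i' : Fin n) : (RP n k) ≃g (RP n k) where
  toEquiv := legSwapEquiv n k i i'
  map_rel_iff' := by
    intro u v
    constructor
    · intro h
      have := legSwap_adj n k i i' _ _ h
      simpa [legSwapEquiv, legSwapFun_invol] using this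
    · exact legSwap_adj n k i i' u v

lemma iso_dist {V : Type*} {G : SimpleGraph V} (φ : G ≃g G) (u v : V) :
    G.dist (φ u) (φ v) = G.dist u v := by
  have key : ∀ (ψ : G ≃g G) (a b : V), G.dist (ψ a) (ψ b) ≤ G.dist a b := by
    intro ψ a b
    by_cases h : G.Reachable a b
    · obtain ⟨p, hp⟩ := h.exists_walk_length_eq_dist
      calc G.dist (ψ a) (ψ b) ≤ (p.map ψ.toHom).length := dist_le _
        _ = G.dist a b := by rw [Walk.length_map, hp]
    · have h2 : ¬ G.Reachable (ψ a) (ψ b) := by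
        intro hr
        exact h (by have := hr.map ψ.symm.toHom; simpa using this)
      rw [dist_eq_zero_of_not_reachable h, dist_eq_zero_of_not_reachable h2]
  refine le_antisymm (key φ u v) ?_
  have := key φ.symm (φ u) (φ v)
  simpa using this

lemma distToSet_iso {V : Type*} {G : SimpleGraph V} (φ : G ≃g G) (u : V) (S : Set V) :
    distToSet G (φ u) (φ '' S) = distToSet G u S := by
  unfold distToSet
  congr 1
  rw [Set.image_image]
  exact Set.image_congr fun s _ => iso_dist φ u s

/-- Any graph on a connected fintype vertex set has a locating coloring (the injective one). -/
lemma exists_locating_of_connected {V : Type*} [Fintype V] [DecidableEq V] {G : SimpleGraph V}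
    (hconn : G.Connected) : ∃ c : V → Fin (Fintype.card V), IsLocatingColoring G c := by
  refine ⟨Fintype.equivFin V, ?_, ?_⟩
  · intro u v huv he
    exact huv.ne ((Fintype.equivFin V).injective he)
  · intro u v huv
    refine ⟨Fintype.equivFin V u, ?_⟩
    have hpre : (Fintype.equivFin V) ⁻¹' {Fintype.equivFin V u} = {u} := by
      ext x; simp [Equiv.eq_symm_apply, eq_comm]
    rw [hpre]
    unfold distToSet
    rw [Set.image_singleton, Set.image_singleton, csInf_singleton, csInf_singleton,
      dist_self]
    have := hconn.pos_dist_of_ne (Ne.symm huv)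
    omega

lemma leg_colors_injective (hk : 1 ≤ k) {m : ℕ}
    (c : Option ((_ : Fin n) × Fin k) → Fin m) (hc : IsLocatingColoring (RP n k) c) :
    Function.Injective (fun (i : Fin n) (j : Fin k) => c (some ⟨i, j⟩)) := by
  intro i i' h
  by_contra hne
  -- the leg-swap automorphism preserves colors
  set σ := legSwapIso n k i i' with hσ
  have hcσ : ∀ v, c (σ v) = c v := by
    rintro (_ | ⟨a, j⟩)
    · rfl
    · show c (some ⟨Equiv.swap i i' a, j⟩) = c (some ⟨a, j⟩)
      rcases eq_or_ne a i with rfl | hai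
      · rw [Equiv.swap_apply_left]
        exact (congrFun h.symm j : _)
      rcases eq_or_ne a i' with rfl | hai'
      · rw [Equiv.swap_apply_right]
        exact (congrFun h j : _)
      · rw [Equiv.swap_apply_of_ne_of_ne hai hai']
  have himg : ∀ t : Fin m, σ '' (c ⁻¹' {t}) = c ⁻¹' {t} := by
    intro t
    ext x
    simp only [Set.mem_image, Set.mem_preimage, Set.mem_singleton_iff]
    constructor
    · rintro ⟨y, hy, rfl⟩; rw [hcσ]; exact hy
    · intro hx
      exact ⟨σ.symm x, by rw [← hcσ (σ.symm x)]; simpa using hx, by simp⟩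
  set u : Option ((_ : Fin n) × Fin k) := some ⟨i, ⟨0, hk⟩⟩ with hu
  set v : Option ((_ : Fin n) × Fin k) := some ⟨i', ⟨0, hk⟩⟩ with hv
  have huv : u ≠ v := by
    intro he
    rw [hu, hv, Option.some_inj] at he
    exact hne (Sigma.mk.inj_iff.mp he).1
  have hσu : σ u = v := by
    show some ⟨Equiv.swap i i' i, ⟨0, hk⟩⟩ = v
    rw [Equiv.swap_apply_left]
  obtain ⟨t, ht⟩ := hc.2 u v huv
  apply ht
  calc distToSet (RP n k) u (c ⁻¹' {t})
      = distToSet (RP n k) (σ u) (σ '' (c ⁻¹' {t})) := (distToSet_iso σ u _).symm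
    _ = distToSet (RP n k) v (c ⁻¹' {t}) := by rw [hσu, himg]

end Aux

/-- For every positive integer `k` and every `n ≥ 2`,
`n ≤ (χ_L(S_n(k)))^k`; equivalently, `χ_L(S_n(k)) ≥ n^{1/k}`. -/
theorem locatingChromaticNumber_regularPalm_lower (k : ℕ) (hk : 1 ≤ k)
    (n : ℕ) (hn : 2 ≤ n) :
    n ≤ (locatingChromaticNumber (Palm n (fun _ => k))) ^ k ∧
      (n : ℝ) ^ ((1 : ℝ) / k) ≤ (locatingChromaticNumber (Palm n (fun _ => k)) : ℝ) := by
  have hχ : locatingChromaticNumber (Palm n (fun _ => k)) = locatingChromaticNumber (RP n k) :=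
    rfl
  have hne : {m : ℕ | ∃ c : Option ((_ : Fin n) × Fin k) → Fin m,
      IsLocatingColoring (RP n k) c}.Nonempty := by
    obtain ⟨c, hc⟩ := exists_locating_of_connected (palm_connected n k (by omega) hk)
    exact ⟨_, c, hc⟩
  have hmem := Nat.sInf_mem hne
  obtain ⟨c, hc⟩ := hmem
  set χ : ℕ := locatingChromaticNumber (RP n k) with hχdef
  have hinj := leg_colors_injective n k hk c hc
  have h1 : n ≤ χ ^ k := by
    have := Fintype.card_le_of_injective _ hinj
    simp at this
    exact this
  refine ⟨hχ ▸ h1, ?_⟩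
  rw [hχ]
  have hk0 : (k : ℝ) ≠ 0 := by positivity
  have hcast : (n : ℝ) ≤ (χ : ℝ) ^ (k : ℕ) := by exact_mod_cast h1
  calc (n : ℝ) ^ ((1 : ℝ) / k)
      ≤ ((χ : ℝ) ^ (k : ℕ)) ^ ((1 : ℝ) / k) := by
        apply Real.rpow_le_rpow (by positivity) hcast (by positivity)
    _ = (χ : ℝ) := by
        rw [← Real.rpow_natCast (χ : ℝ) k, ← Real.rpow_mul (by positivity),
          mul_one_div, div_self hk0, Real.rpow_one]
end

section
/- For every positive integer k and every n ≥ 4·3^{2k+1}, χ_L(S_n(k)) ≤ 2k·n^{1/k}. -/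
open SimpleGraph

namespace PalmAux

variable {n k : ℕ}

def pdepth : PalmVert n (fun _ => k) → ℕ
  | none => 0
  | some x => x.2.val + 1

def sdepth (i0 : Fin n) : PalmVert n (fun _ => k) → ℤ
  | none => 0
  | some x => if x.1 = i0 then (x.2.val : ℤ) + 1 else -((x.2.val : ℤ) + 1)

lemma pdepth_lip {u v : PalmVert n (fun _ => k)} (h : (Palm n fun _ => k).Adj u v) :
    pdepth u + 1 = pdepth v ∨ pdepth v + 1 = pdepth u := by
  rw [Palm, fromRel_adj] at h
  obtain ⟨hne, h⟩ := h
  match u, v with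
  | none, none => simp at h
  | none, some ⟨i, j⟩ => simp_all [pdepth]
  | some ⟨i, j⟩, none => simp_all [pdepth]
  | some ⟨i, j⟩, some ⟨i', j'⟩ => simp_all [pdepth]; omega

lemma sdepth_lip (i0 : Fin n) {u v : PalmVert n (fun _ => k)}
    (h : (Palm n fun _ => k).Adj u v) : |sdepth i0 u - sdepth i0 v| ≤ 1 := by
  rw [Palm, fromRel_adj] at h
  obtain ⟨hne, h⟩ := h
  match u, v with
  | none, none => simp at h
  | none, some ⟨i, j⟩ =>
    simp only [sdepth]
    rcases h with h | h
    · simp only at h; rw [h]; split <;> simp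
    · simp only at h
  | some ⟨i, j⟩, none =>
    simp only [sdepth]
    rcases h with h | h
    · simp only at h
    · simp only at h; rw [h]; split <;> simp
  | some ⟨i, j⟩, some ⟨i', j'⟩ =>
    have hii : i = i' := by
      rcases h with h | h
      · exact Fin.ext h.1
      · exact (Fin.ext h.1).symm
    subst hii
    simp only [sdepth]
    split
    · rcases h with h | h
      · obtain ⟨-, h2⟩ := h; rw [h2]; push_cast; rw [abs_sub_comm]; simp
      · obtain ⟨-, h2⟩ := h; rw [h2]; push_cast; simp
    · rcases h with h | h
      · obtain ⟨-, h2⟩ := h; rw [h2]; push_cast; simp [abs_sub_comm]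
      · obtain ⟨-, h2⟩ := h; rw [h2]; push_cast; simp [abs_sub_comm]

lemma walk_abs {f : PalmVert n (fun _ => k) → ℤ}
    (hf : ∀ ⦃a b⦄, (Palm n fun _ => k).Adj a b → |f a - f b| ≤ 1)
    {u v} (W : (Palm n fun _ => k).Walk u v) : |f u - f v| ≤ W.length := by
  induction W with
  | nil => simp
  | cons h W ih =>
    rename_i a b c
    calc |f a - f c| ≤ |f a - f b| + |f b - f c| := abs_sub_le _ _ _
    _ ≤ 1 + W.length := add_le_add (hf h) ih
    _ = _ := by push_cast [Walk.length_cons]; ring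

lemma pdepth_abs {a b : PalmVert n (fun _ => k)} (h : (Palm n fun _ => k).Adj a b) :
    |(pdepth a : ℤ) - pdepth b| ≤ 1 := by
  rw [abs_le]
  rcases pdepth_lip h with h | h <;> omega

lemma adj_hub (i : Fin n) (h0 : 0 < k) :
    (Palm n fun _ => k).Adj none (some ⟨i, ⟨0, h0⟩⟩) := by
  erw [Palm, fromRel_adj]
  exact ⟨(by intro h; cases h), Or.inl rfl⟩

lemma adj_succ (i : Fin n) (j : ℕ) (h : j + 1 < k) :
    (Palm n fun _ => k).Adj (some ⟨i, ⟨j, Nat.lt_of_succ_lt h⟩⟩) (some ⟨i, ⟨j + 1, h⟩⟩) := by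
  erw [Palm, fromRel_adj]
  refine ⟨fun hc => ?_, Or.inl ⟨rfl, rfl⟩⟩
  have : j = j + 1 := congrArg (fun u => pdepth u - 1) hc
  omega

def walkToHub (i : Fin n) : (j : ℕ) → (h : j < k) →
    (Palm n fun _ => k).Walk (some ⟨i, ⟨j, h⟩⟩) none
  | 0, h => Walk.cons (adj_hub i h).symm Walk.nil
  | j+1, h => Walk.cons (adj_succ i j h).symm (walkToHub i j (Nat.lt_of_succ_lt h))

lemma walkToHub_length (i : Fin n) (j : ℕ) (h : j < k) :
    (walkToHub i j h).length = j + 1 := by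
  induction j with
  | zero => rfl
  | succ j ih => erw [walkToHub, Walk.length_cons, ih]

def walkSame (i : Fin n) (p : ℕ) : (d : ℕ) → (h : p + d < k) →
    (Palm n fun _ => k).Walk (some ⟨i, ⟨p + d, h⟩⟩)
      (some ⟨i, ⟨p, lt_of_le_of_lt (Nat.le_add_right p d) h⟩⟩)
  | 0, _ => Walk.nil
  | d+1, h => Walk.cons ((adj_succ i (p+d) h).symm) (walkSame i p d (Nat.lt_of_succ_lt h))

lemma walkSame_length (i : Fin n) (p d : ℕ) (h : p + d < k) :
    (walkSame i p d h).length = d := by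
  induction d with
  | zero => rfl
  | succ d ih => erw [walkSame, Walk.length_cons, ih]

lemma dist_hub (i : Fin n) (j : Fin k) :
    (Palm n fun _ => k).dist (some ⟨i, j⟩) none = j.val + 1 := by
  apply le_antisymm
  · have h1 := SimpleGraph.dist_le (walkToHub i j.val j.isLt)
    rw [walkToHub_length] at h1
    simpa using h1
  · obtain ⟨p, hp⟩ := (Reachable.exists_walk_length_eq_dist ⟨walkToHub i j.val j.isLt⟩)
    have h2 := walk_abs (f := fun u => (pdepth u : ℤ)) (fun a b hadj => pdepth_abs hadj) p
    rw [hp] at h2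
    have h3 := (le_abs_self _).trans h2
    simp only [pdepth, Fin.eta] at h3 ⊢
    omega

lemma sdepth_some_self (i : Fin n) (j : Fin k) :
    sdepth i (some ⟨i, j⟩ : PalmVert n (fun _ => k)) = (j.val : ℤ) + 1 := by
  simp [sdepth]

lemma sdepth_some_ne {i i' : Fin n} (hne : i' ≠ i) (j : Fin k) :
    sdepth i (some ⟨i', j⟩ : PalmVert n (fun _ => k)) = -((j.val : ℤ) + 1) := by
  simp [sdepth, hne]

lemma dist_cross {i i' : Fin n} (hne : i ≠ i') (j j' : Fin k) :
    (Palm n fun _ => k).dist (some ⟨i, j⟩) (some ⟨i', j'⟩) = j.val + j'.val + 2 := by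
  apply le_antisymm
  · have h1 := SimpleGraph.dist_le
      ((walkToHub i j.val j.isLt).append (walkToHub i' j'.val j'.isLt).reverse)
    erw [Walk.length_append, Walk.length_reverse, walkToHub_length, walkToHub_length] at h1
    simp only [Fin.eta] at h1
    omega
  · obtain ⟨p, hp⟩ := (Reachable.exists_walk_length_eq_dist
      ⟨(walkToHub i j.val j.isLt).append (walkToHub i' j'.val j'.isLt).reverse⟩)
    have h2 := walk_abs (f := sdepth i) (fun a b hadj => sdepth_lip i hadj) p
    rw [hp] at h2
    have h3 := (le_abs_self _).trans h2
    clear h2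
    simp only [Fin.eta] at h3 ⊢
    rw [sdepth_some_self, sdepth_some_ne hne.symm] at h3
    omega

lemma dist_same_le' (i : Fin n) (p d : ℕ) (h : p + d < k) :
    (Palm n fun _ => k).dist (some ⟨i, ⟨p + d, h⟩⟩)
      (some ⟨i, ⟨p, lt_of_le_of_lt (Nat.le_add_right p d) h⟩⟩) ≤ d := by
  have h1 := SimpleGraph.dist_le (walkSame i p d h)
  rwa [walkSame_length] at h1

lemma dist_same_le_sub (i : Fin n) (j p : Fin k) (hle : p.val ≤ j.val) :
    (Palm n fun _ => k).dist (some ⟨i, j⟩) (some ⟨i, p⟩) ≤ j.val - p.val := by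
  obtain ⟨jv, hjv⟩ := j
  obtain ⟨pv, hpv⟩ := p
  simp only at hle ⊢
  obtain ⟨d, rfl⟩ : ∃ d, jv = pv + d := ⟨jv - pv, by omega⟩
  exact le_trans (dist_same_le' i pv d hjv) (by omega)

lemma dist_same_le (i : Fin n) (j p : Fin k) :
    (Palm n fun _ => k).dist (some ⟨i, j⟩) (some ⟨i, p⟩) ≤ j.val + p.val := by
  rcases le_total p.val j.val with hle | hle
  · exact le_trans (dist_same_le_sub i j p hle) (by omega)
  · erw [SimpleGraph.dist_comm]
    exact le_trans (dist_same_le_sub i p j hle) (by omega)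

lemma decode {m a b c d : ℕ} (hc : c < m) (hd : d < m)
    (h : a * m + c = b * m + d) : a = b ∧ c = d := by
  have hm : 0 < m := Nat.lt_of_le_of_lt (Nat.zero_le _) hc
  have e1 : (a * m + c) / m = a := by
    rw [Nat.add_comm, Nat.mul_comm, Nat.add_mul_div_left _ _ hm, Nat.div_eq_of_lt hc, Nat.zero_add]
  have e2 : (b * m + d) / m = b := by
    rw [Nat.add_comm, Nat.mul_comm, Nat.add_mul_div_left _ _ hm, Nat.div_eq_of_lt hd, Nat.zero_add]
  have hab : a = b := by rw [← e1, ← e2, h]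
  subst hab
  exact ⟨rfl, by omega⟩

variable (m : ℕ)

def pcol (e : Fin n → Fin k → Fin m) : PalmVert n (fun _ => k) → Fin (k * m + 1)
  | none => ⟨0, Nat.succ_pos _⟩
  | some x => ⟨1 + x.2.val * m + (e x.1 x.2).val, by
      have h1 := (e x.1 x.2).isLt
      have h2 : x.2.val < k := x.2.isLt
      have h3 : (x.2.val + 1) * m ≤ k * m := Nat.mul_le_mul_right m h2
      have h4 : x.2.val * m + m = (x.2.val + 1) * m := by ring
      omega⟩

lemma pcol_some_val (e : Fin n → Fin k → Fin m) (i : Fin n) (j : Fin k) :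
    (pcol m e (some ⟨i, j⟩)).val = 1 + j.val * m + (e i j).val := rfl

lemma class_hub (e : Fin n → Fin k → Fin m) :
    pcol m e ⁻¹' {pcol m e none} = {(none : PalmVert n (fun _ => k))} := by
  ext u
  match u with
  | none => exact iff_of_true rfl rfl
  | some ⟨i, j⟩ =>
    simp only [Set.mem_preimage, Set.mem_singleton_iff]
    constructor
    · intro h
      exfalso
      have hv := congrArg Fin.val h
      rw [pcol_some_val] at hv
      simp only [pcol] at hv
      omega
    · intro h
      exact absurd (show (some ⟨i, j⟩ : PalmVert n (fun _ => k)) = none from h) (by intro h; cases h)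

lemma distToSet_hub (e : Fin n → Fin k → Fin m) (u : PalmVert n (fun _ => k)) :
    distToSet (Palm n fun _ => k) u (pcol m e ⁻¹' {pcol m e none}) = pdepth u := by
  erw [class_hub, distToSet, Set.image_singleton, csInf_singleton]
  match u with
  | none => erw [SimpleGraph.dist_self]; rfl
  | some ⟨i, j⟩ => rw [dist_hub]; rfl

lemma self_mem_class (e : Fin n → Fin k → Fin m) (i0 : Fin n) (p : Fin k) :
    (some ⟨i0, p⟩ : PalmVert n (fun _ => k)) ∈ pcol m e ⁻¹' {pcol m e (some ⟨i0, p⟩)} :=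
  Set.mem_preimage.mpr rfl

lemma mem_class_some {e : Fin n → Fin k → Fin m} {i0 : Fin n} {p : Fin k}
    {u : PalmVert n (fun _ => k)}
    (h : u ∈ pcol m e ⁻¹' {pcol m e (some ⟨i0, p⟩)}) :
    ∃ i'' : Fin n, u = some ⟨i'', p⟩ ∧ (e i'' p).val = (e i0 p).val := by
  match u with
  | none =>
    exfalso
    simp only [Set.mem_preimage, Set.mem_singleton_iff] at h
    have hv := congrArg Fin.val h
    rw [pcol_some_val] at hv
    simp only [pcol] at hv
    omega
  | some ⟨i'', p'⟩ =>
    simp only [Set.mem_preimage, Set.mem_singleton_iff] at h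
    have hv := congrArg Fin.val h
    rw [pcol_some_val, pcol_some_val] at hv
    obtain ⟨h1, h2⟩ := decode (a := p'.val) (b := p.val) (e i'' p').isLt (e i0 p).isLt (by omega)
    have hp' : p' = p := Fin.ext h1
    refine ⟨i'', by rw [hp'], ?_⟩
    rw [hp'] at h2
    exact h2

lemma distToSet_far (e : Fin n → Fin k → Fin m) {i0 i' : Fin n} {p : Fin k}
    (hw : (e i' p).val ≠ (e i0 p).val) (j : Fin k) :
    distToSet (Palm n fun _ => k) (some ⟨i', j⟩) (pcol m e ⁻¹' {pcol m e (some ⟨i0, p⟩)}) =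
      j.val + p.val + 2 := by
  have hne : i' ≠ i0 := fun hc => hw (by rw [hc])
  have himg : (Palm n fun _ => k).dist (some ⟨i', j⟩) ''
      (pcol m e ⁻¹' {pcol m e (some ⟨i0, p⟩)}) = {j.val + p.val + 2} := by
    rw [Set.eq_singleton_iff_unique_mem]
    constructor
    · exact ⟨some ⟨i0, p⟩, self_mem_class m e i0 p, dist_cross hne j p⟩
    · rintro x ⟨s, hs, rfl⟩
      obtain ⟨i2, rfl, hw2⟩ := mem_class_some (m := m) hs
      have hne2 : i' ≠ i2 := fun hc => hw (by rw [hc, hw2])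
      exact dist_cross hne2 j p
  unfold distToSet; rw [himg, csInf_singleton]

lemma distToSet_near (e : Fin n → Fin k → Fin m) (i0 : Fin n) (p j : Fin k) :
    distToSet (Palm n fun _ => k) (some ⟨i0, j⟩) (pcol m e ⁻¹' {pcol m e (some ⟨i0, p⟩)}) ≤
      j.val + p.val :=
  le_trans (Nat.sInf_le ⟨some ⟨i0, p⟩, self_mem_class m e i0 p, rfl⟩) (dist_same_le i0 j p)

lemma pcol_proper (e : Fin n → Fin k → Fin m) {u v : PalmVert n (fun _ => k)}
    (h : (Palm n fun _ => k).Adj u v) : pcol m e u ≠ pcol m e v := by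
  rw [Palm, fromRel_adj] at h
  obtain ⟨hne, h⟩ := h
  match u, v with
  | none, none => simp at h
  | none, some ⟨i, j⟩ =>
    intro hc
    have hv := congrArg Fin.val hc
    rw [pcol_some_val] at hv
    simp only [pcol] at hv
    omega
  | some ⟨i, j⟩, none =>
    intro hc
    have hv := congrArg Fin.val hc
    rw [pcol_some_val] at hv
    simp only [pcol] at hv
    omega
  | some ⟨i, j⟩, some ⟨i', j'⟩ =>
    intro hc
    have hv := congrArg Fin.val hc
    rw [pcol_some_val, pcol_some_val] at hv
    obtain ⟨h1, h2⟩ := decode (a := j.val) (b := j'.val) (e i j).isLt (e i' j').isLt (by omega)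
    rcases h with h | h
    · omega
    · omega

lemma pcol_locating (e : Fin n → Fin k → Fin m) (he : Function.Injective e) :
    IsLocatingColoring (Palm n fun _ => k) (pcol m e) := by
  refine ⟨fun u v h => pcol_proper m e h, fun u v huv => ?_⟩
  match u, v with
  | none, none => exact absurd rfl huv
  | none, some ⟨i, j⟩ =>
    refine ⟨pcol m e none, ?_⟩
    erw [distToSet_hub, distToSet_hub]
    simp [pdepth]
  | some ⟨i, j⟩, none =>
    refine ⟨pcol m e none, ?_⟩
    erw [distToSet_hub, distToSet_hub]
    simp [pdepth]
  | some ⟨i, j⟩, some ⟨i', j'⟩ =>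
    by_cases hj : j.val = j'.val
    · have hii : i ≠ i' := by
        rintro rfl
        exact huv (by rw [Fin.ext hj])
      have hee : e i ≠ e i' := fun hc => hii (he hc)
      obtain ⟨p, hp⟩ := Function.ne_iff.mp hee
      refine ⟨pcol m e (some ⟨i, p⟩), ?_⟩
      have h1 := distToSet_near m e i p j
      have h2 := distToSet_far m e
        (show (e i' p).val ≠ (e i p).val from fun hc => hp (Fin.ext hc).symm) j'
      omega
    · refine ⟨pcol m e none, ?_⟩
      erw [distToSet_hub, distToSet_hub]
      simpa [pdepth] using hj

end PalmAux

/-- For every positive integer `k` and every `n ≥ 4·3^{2k+1}`,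
`χ_L(S_n(k)) ≤ 2k · n^{1/k}`. -/
theorem locatingChromaticNumber_regularPalm_upper (k : ℕ) (hk : 1 ≤ k)
    (n : ℕ) (hn : 4 * 3 ^ (2 * k + 1) ≤ n) :
    (locatingChromaticNumber (Palm n (fun _ => k)) : ℝ) ≤
      2 * (k : ℝ) * (n : ℝ) ^ ((1 : ℝ) / k) := by
  set x : ℝ := (n : ℝ) ^ ((1 : ℝ) / k) with hxdef
  set m : ℕ := ⌈x⌉₊ with hmdef
  have hk0 : (k : ℝ) ≠ 0 := Nat.cast_ne_zero.mpr (by omega)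
  have hx0 : 0 ≤ x := Real.rpow_nonneg (Nat.cast_nonneg n) _
  have hxpow : x ^ k = (n : ℝ) := by
    rw [hxdef, ← Real.rpow_natCast ((n : ℝ) ^ ((1 : ℝ) / k)) k,
      ← Real.rpow_mul (Nat.cast_nonneg n), one_div_mul_cancel hk0, Real.rpow_one]
  have hnm : n ≤ m ^ k := by
    have h1 : (n : ℝ) ≤ (m : ℝ) ^ k := by
      rw [← hxpow]
      exact pow_le_pow_left₀ hx0 (Nat.le_ceil _) k
    exact_mod_cast h1
  obtain ⟨e⟩ := Function.Embedding.nonempty_of_card_le (α := Fin n) (β := Fin k → Fin m)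
    (by simpa [Fintype.card_fun] using hnm)
  have hloc := PalmAux.pcol_locating (n := n) (k := k) m e e.injective
  have hchi : locatingChromaticNumber (Palm n (fun _ => k)) ≤ k * m + 1 :=
    Nat.sInf_le ⟨PalmAux.pcol m e, hloc⟩
  have h2k : 2 ^ k ≤ n := by
    calc 2 ^ k ≤ 3 ^ k := Nat.pow_le_pow_left (by norm_num) k
    _ ≤ 3 ^ (2 * k + 1) := Nat.pow_le_pow_right (by norm_num) (by omega)
    _ ≤ 4 * 3 ^ (2 * k + 1) := by omega
    _ ≤ n := hn
  have hx2 : (2 : ℝ) ≤ x := by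
    calc (2 : ℝ) = ((2 : ℝ) ^ k) ^ ((1 : ℝ) / k) := by
          rw [← Real.rpow_natCast 2 k, ← Real.rpow_mul (by norm_num),
            mul_one_div, div_self hk0, Real.rpow_one]
    _ ≤ x := by
        rw [hxdef]
        apply Real.rpow_le_rpow (by positivity) (by exact_mod_cast h2k) (by positivity)
  have hm_lt : (m : ℝ) < x + 1 := Nat.ceil_lt_add_one hx0
  have hk1 : (1 : ℝ) ≤ k := by exact_mod_cast hk
  calc (locatingChromaticNumber (Palm n (fun _ => k)) : ℝ) ≤ (k * m + 1 : ℕ) := by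
        exact_mod_cast hchi
  _ ≤ 2 * (k : ℝ) * x := by
      push_cast
      nlinarith [hm_lt, hx2, hk1, mul_le_mul_of_nonneg_left hm_lt.le (le_trans zero_le_one hk1)]
end
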